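/- arXiv:1608.06573 — 5 statements merged into one kernel-verified Lean document; each statement's English description precedes it below -/
import Mathlib

section
/- Let T be a linear operator on polynomials such that φₖ := T[xᵏ] is a standard L-base for L = d²/dx² − q (i.e. φ₀'' = qφ₀, φ₁'' = qφ₁, and φₖ'' − qφₖ = k(k−1)φₖ₋₂ with φₖ(0) = φₖ'(0) = 0 for k ≥ 2). If T[1] = 0, then T[xᵏ] = 0 for every even k ≥ 0, and consequently T = T∘P₋ on polynomials, where (P₋u)(x) = (u(x)−u(−x))/2. -/
open MeasureTheory Set Polynomial Topology Filter

private lemma mulCont_integrableOn {a b : ℝ} {q f : ℝ → ℝ}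
    (hq : IntegrableOn q (Icc a b)) (hf : ContinuousOn f (Icc a b)) :
    IntegrableOn (fun s => q s * f s) (Icc a b) := by
  obtain ⟨C, hC⟩ := isCompact_Icc.exists_bound_of_continuousOn hf
  have h := hq.bdd_mul (c := C) (hf.aestronglyMeasurable measurableSet_Icc) ?_
  · have e : (fun s => q s * f s) = fun s => f s * q s := by ext s; ring
    rw [e]; exact h
  · filter_upwards [ae_restrict_mem measurableSet_Icc] with s hs using hC s hs

private lemma uniq_forward {b : ℝ} (hb : 0 ≤ b) {q f g : ℝ → ℝ}
    (hq : IntegrableOn q (Icc 0 b))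
    (hf : ContinuousOn f (Icc 0 b))
    (hfg : ∀ x ∈ Icc 0 b, f x = ∫ s in (0:ℝ)..x, g s)
    (hg : ∀ x ∈ Icc 0 b, g x = ∫ s in (0:ℝ)..x, q s * f s) :
    ∀ x ∈ Icc 0 b, f x = 0 := by
  have h0m : (0:ℝ) ∈ Icc 0 b := left_mem_Icc.2 hb
  have hbm : b ∈ Icc 0 b := right_mem_Icc.2 hb
  have huIcc : uIcc (0:ℝ) b = Icc 0 b := uIcc_of_le hb
  have hqf : IntegrableOn (fun s => q s * f s) (Icc 0 b) := mulCont_integrableOn hq hf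
  have hqfI : ∀ u v : ℝ, u ∈ Icc 0 b → v ∈ Icc 0 b →
      IntervalIntegrable (fun s => q s * f s) volume u v := fun u v hu hv =>
    (hqf.mono_set (uIcc_subset_Icc hu hv)).intervalIntegrable
  have hgc : ContinuousOn g (Icc 0 b) := by
    have h := intervalIntegral.continuousOn_primitive_interval' (hqfI 0 b h0m hbm)
      (by rw [huIcc]; exact h0m)
    rw [huIcc] at h
    exact h.congr fun x hx => hg x hx
  have hgI : ∀ u v : ℝ, u ∈ Icc 0 b → v ∈ Icc 0 b → IntervalIntegrable g volume u v :=
    fun u v hu hv => (hgc.mono (uIcc_subset_Icc hu hv)).intervalIntegrable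
  have hf0 : f 0 = 0 := by simpa using hfg 0 h0m
  set S : Set ℝ := {x | x ∈ Icc 0 b ∧ ∀ t ∈ Icc 0 x, f t = 0} with hSdef
  have hS0 : (0:ℝ) ∈ S := by
    refine ⟨h0m, fun t ht => ?_⟩
    have : t = 0 := le_antisymm ht.2 ht.1
    rw [this]; exact hf0
  have hSbdd : BddAbove S := ⟨b, fun x hx => hx.1.2⟩
  set c := sSup S with hcdef
  have hc0 : 0 ≤ c := le_csSup hSbdd hS0
  have hcb : c ≤ b := csSup_le ⟨0, hS0⟩ fun x hx => hx.1.2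
  have hcIcc : c ∈ Icc 0 b := ⟨hc0, hcb⟩
  have hlt : ∀ s : ℝ, 0 ≤ s → s < c → f s = 0 := by
    intro s hs0 hsc
    obtain ⟨x, hxS, hx⟩ := exists_lt_of_lt_csSup ⟨0, hS0⟩ hsc
    exact hxS.2 s ⟨hs0, hx.le⟩
  have hfzc : f c = 0 := by
    rcases eq_or_lt_of_le hc0 with h0 | h0
    · rw [← h0]; exact hf0
    · have hcl : c ∈ closure (Ico 0 c) := by
        rw [closure_Ico h0.ne]; exact ⟨hc0, le_refl c⟩
      haveI : (𝓝[Ico 0 c] c).NeBot := mem_closure_iff_nhdsWithin_neBot.1 hcl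
      have h1 : Filter.Tendsto f (𝓝[Ico 0 c] c) (𝓝 (f c)) :=
        (hf.continuousWithinAt hcIcc).mono
          (fun y hy => ⟨hy.1, hy.2.le.trans hcb⟩)
      have h2 : Filter.Tendsto f (𝓝[Ico 0 c] c) (𝓝 0) := by
        refine Filter.Tendsto.congr' ?_ tendsto_const_nhds
        filter_upwards [self_mem_nhdsWithin] with s hs
        exact (hlt s hs.1 hs.2).symm
      exact tendsto_nhds_unique h1 h2
  have hfz : ∀ t ∈ Icc 0 c, f t = 0 := by
    intro t ht
    rcases lt_or_eq_of_le ht.2 with h | h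
    · exact hlt t ht.1 h
    · rw [h]; exact hfzc
  have hceq : c = b := by
    by_contra hne
    have hcltb : c < b := lt_of_le_of_ne hcb hne
    have hgc0 : g c = 0 := by
      rw [hg c hcIcc]
      have he : EqOn (fun s => q s * f s) (fun _ => (0:ℝ)) (uIcc 0 c) := by
        intro s hs
        rw [uIcc_of_le hc0] at hs
        simp [hfz s hs]
      rw [intervalIntegral.integral_congr he, intervalIntegral.integral_const]
      simp
    have habs : IntegrableOn (fun s => |q s|) (Icc 0 b) := hq.abs
    have habsI : ∀ u v : ℝ, u ∈ Icc 0 b → v ∈ Icc 0 b →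
        IntervalIntegrable (fun s => |q s|) volume u v := fun u v hu hv =>
      (habs.mono_set (uIcc_subset_Icc hu hv)).intervalIntegrable
    set ε := (2 * (b + 1))⁻¹ with hεdef
    have hεpos : 0 < ε := by positivity
    have hQcont : Filter.Tendsto (fun x => ∫ s in c..x, |q s|) (𝓝[Ioc c b] c) (𝓝 0) := by
      have h := intervalIntegral.continuousOn_primitive_interval' (habsI 0 b h0m hbm)
        (a := c) (by rw [huIcc]; exact hcIcc)
      have h2 : ContinuousWithinAt (fun x => ∫ s in c..x, |q s|) (Ioc c b) c :=
        (h c (by rw [huIcc]; exact hcIcc)).mono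
          (by rw [huIcc]; exact fun y hy => ⟨hc0.trans hy.1.le, hy.2⟩)
      have h3 : Filter.Tendsto (fun x => ∫ s in c..x, |q s|) (𝓝[Ioc c b] c)
          (𝓝 ((fun x => ∫ s in c..x, |q s|) c)) := h2
      simpa using h3
    haveI hNB : (𝓝[Ioc c b] c).NeBot := by
      refine mem_closure_iff_nhdsWithin_neBot.1 ?_
      rw [closure_Ioc hcltb.ne]; exact ⟨le_refl c, hcb⟩
    have hev : ∀ᶠ x in 𝓝[Ioc c b] c, (∫ s in c..x, |q s|) < ε :=
      hQcont.eventually_lt_const hεpos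
    obtain ⟨d, hdQ, hdmem⟩ := (hev.and eventually_mem_nhdsWithin).exists
    set Qd := ∫ s in c..d, |q s| with hQddef
    have hQdnn : 0 ≤ Qd :=
      intervalIntegral.integral_nonneg hdmem.1.le fun s _ => abs_nonneg _
    have hdIcc : d ∈ Icc 0 b := ⟨hc0.trans hdmem.1.le, hdmem.2⟩
    have hsub : Icc c d ⊆ Icc 0 b := fun y hy => ⟨hc0.trans hy.1, hy.2.trans hdmem.2⟩
    obtain ⟨x₀, hx₀, hmax⟩ := isCompact_Icc.exists_isMaxOn
      ⟨c, left_mem_Icc.2 hdmem.1.le⟩ ((hf.mono hsub).abs)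
    set M := |f x₀| with hMdef
    have hMnn : 0 ≤ M := abs_nonneg _
    have hMb : ∀ y ∈ Icc c d, |f y| ≤ M := fun y hy => hmax hy
    have hgb : ∀ s ∈ Icc c d, |g s| ≤ Qd * M := by
      intro s hs
      have hsI : s ∈ Icc 0 b := hsub hs
      have h1 : g s = ∫ t in c..s, q t * f t := by
        have hsum := intervalIntegral.integral_interval_sub_left
          (hqfI 0 s h0m hsI) (hqfI 0 c h0m hcIcc)
        have e3 : (∫ t in (0:ℝ)..c, q t * f t) = 0 := by
          rw [← hg c hcIcc]; exact hgc0
        rw [hg s hsI, ← hsum, e3, sub_zero]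
      rw [h1]
      have step1 : |∫ t in c..s, q t * f t| ≤ ∫ t in c..s, |q t * f t| :=
        intervalIntegral.abs_integral_le_integral_abs hs.1
      have step2 : (∫ t in c..s, |q t * f t|) ≤ ∫ t in c..s, |q t| * M := by
        refine intervalIntegral.integral_mono_on hs.1 ((hqfI c s hcIcc hsI).abs)
          ((habsI c s hcIcc hsI).mul_const M) ?_
        intro t ht
        rw [abs_mul]
        exact mul_le_mul_of_nonneg_left (hMb t ⟨ht.1, ht.2.trans hs.2⟩) (abs_nonneg _)
      have step3 : (∫ t in c..s, |q t| * M) = (∫ t in c..s, |q t|) * M :=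
        intervalIntegral.integral_mul_const M _
      have step4 : (∫ t in c..s, |q t|) ≤ Qd := by
        have h4 := intervalIntegral.integral_add_adjacent_intervals
          (habsI c s hcIcc hsI) (habsI s d hsI hdIcc)
        have h5 : 0 ≤ ∫ t in s..d, |q t| :=
          intervalIntegral.integral_nonneg hs.2 fun t _ => abs_nonneg _
        linarith
      have step5 : (∫ t in c..s, |q t|) * M ≤ Qd * M :=
        mul_le_mul_of_nonneg_right step4 hMnn
      linarith
    have hfb : M ≤ (d - c) * (Qd * M) := by
      have hx₀I : x₀ ∈ Icc 0 b := hsub hx₀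
      have h1 : f x₀ = ∫ s in c..x₀, g s := by
        have hsum := intervalIntegral.integral_interval_sub_left
          (hgI 0 x₀ h0m hx₀I) (hgI 0 c h0m hcIcc)
        have e3 : (∫ s in (0:ℝ)..c, g s) = 0 := by
          rw [← hfg c hcIcc]; exact hfz c ⟨hc0, le_refl c⟩
        rw [hfg x₀ hx₀I, ← hsum, e3, sub_zero]
      have step1 : M = |∫ s in c..x₀, g s| := by rw [← h1]
      have step2 : |∫ s in c..x₀, g s| ≤ ∫ s in c..x₀, |g s| :=
        intervalIntegral.abs_integral_le_integral_abs hx₀.1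
      have step3 : (∫ s in c..x₀, |g s|) ≤ ∫ s in c..x₀, (fun _ => Qd * M) s := by
        refine intervalIntegral.integral_mono_on hx₀.1 ((hgI c x₀ hcIcc hx₀I).abs)
          intervalIntegrable_const ?_
        intro t ht
        exact hgb t ⟨ht.1, ht.2.trans hx₀.2⟩
      have step4 : (∫ _s in c..x₀, Qd * M) = (x₀ - c) * (Qd * M) := by
        rw [intervalIntegral.integral_const, smul_eq_mul]
      have step5 : (x₀ - c) * (Qd * M) ≤ (d - c) * (Qd * M) :=
        mul_le_mul_of_nonneg_right (by linarith [hx₀.2]) (mul_nonneg hQdnn hMnn)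
      calc M = |∫ s in c..x₀, g s| := step1
        _ ≤ ∫ s in c..x₀, |g s| := step2
        _ ≤ ∫ _s in c..x₀, Qd * M := step3
        _ = (x₀ - c) * (Qd * M) := step4
        _ ≤ (d - c) * (Qd * M) := step5
    have hM0 : M = 0 := by
      have hde : ε * (2 * (b + 1)) = 1 := inv_mul_cancel₀ (by positivity)
      have h1 : M ≤ b * (Qd * M) := hfb.trans (mul_le_mul_of_nonneg_right
        (by linarith [hdmem.2]) (mul_nonneg hQdnn hMnn))
      have h2 : Qd * M ≤ ε * M := mul_le_mul_of_nonneg_right hdQ.le hMnn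
      have h3 : b * (Qd * M) ≤ b * (ε * M) := mul_le_mul_of_nonneg_left h2 hb
      have h4 : b * ε ≤ 1/2 := by nlinarith [hεpos]
      have h5 : (b * ε) * M ≤ (1/2) * M := mul_le_mul_of_nonneg_right h4 hMnn
      linarith
    have hdS : d ∈ S := by
      refine ⟨hdIcc, fun t ht => ?_⟩
      rcases le_or_gt t c with h | h
      · exact hfz t ⟨ht.1, h⟩
      · have h2 : |f t| ≤ M := hMb t ⟨h.le, ht.2⟩
        rw [hM0] at h2
        exact abs_eq_zero.1 (le_antisymm h2 (abs_nonneg _))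
    exact absurd (le_csSup hSbdd hdS) (not_le.2 hdmem.1)
  intro x hx
  exact hfz x ⟨hx.1, hx.2.trans_eq hceq.symm⟩
private lemma uniq_two {a b : ℝ} (ha : a ≤ 0) (hb : 0 ≤ b) {q f g : ℝ → ℝ}
    (hq : IntegrableOn q (Icc a b)) (hf : ContinuousOn f (Icc a b))
    (hfg : ∀ x ∈ Icc a b, f x = ∫ s in (0:ℝ)..x, g s)
    (hg : ∀ x ∈ Icc a b, g x = ∫ s in (0:ℝ)..x, q s * f s) :
    ∀ x ∈ Icc a b, f x = 0 := by
  have hsub1 : Icc (0:ℝ) b ⊆ Icc a b := Icc_subset_Icc ha le_rfl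
  have hpos : ∀ x ∈ Icc 0 b, f x = 0 :=
    uniq_forward hb (hq.mono_set hsub1) (hf.mono hsub1)
      (fun x hx => hfg x (hsub1 hx)) (fun x hx => hg x (hsub1 hx))
  intro x hx
  rcases le_or_gt 0 x with h | h
  · exact hpos x ⟨h, hx.2⟩
  · have hsub2 : Icc a (0:ℝ) ⊆ Icc a b := Icc_subset_Icc le_rfl hb
    have hmaps : ∀ u ∈ Icc (0:ℝ) (-a), -u ∈ Icc a b := fun u hu =>
      hsub2 ⟨by linarith [hu.2], by linarith [hu.1]⟩
    have hneg : ∀ u ∈ Icc (0:ℝ) (-a), f (-u) = 0 := by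
      refine uniq_forward (neg_nonneg.2 ha) (q := fun u => q (-u)) (f := fun u => f (-u))
        (g := fun u => -g (-u)) ?_ ?_ ?_ ?_
      · have h1 : IntervalIntegrable q volume a 0 :=
          (hq.mono_set (by rw [uIcc_of_le ha]; exact hsub2)).intervalIntegrable
        have h2 := (IntervalIntegrable.iff_comp_neg (f := q)).1 h1
        rw [neg_zero] at h2
        exact (intervalIntegrable_iff_integrableOn_Icc_of_le (neg_nonneg.2 ha)).1 h2.symm
      · exact hf.comp continuous_neg.continuousOn fun u hu => hmaps u hu
      · intro u hu
        have e : (∫ s in (0:ℝ)..u, -g (-s)) = ∫ s in (0:ℝ)..(-u), g s := by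
          have e1 : (∫ s in (0:ℝ)..u, -g (-s)) = ∫ s in (-u)..(-0:ℝ), -g s :=
            intervalIntegral.integral_comp_neg (fun s => -g s)
          rw [e1, neg_zero, intervalIntegral.integral_neg, ← intervalIntegral.integral_symm]
        show f (-u) = ∫ s in (0:ℝ)..u, -g (-s)
        rw [hfg (-u) (hmaps u hu), ← e]
      · intro u hu
        have e : (∫ s in (0:ℝ)..u, q (-s) * f (-s)) = ∫ s in (-u)..(0:ℝ), q s * f s := by
          have e1 : (∫ s in (0:ℝ)..u, q (-s) * f (-s)) = ∫ s in (-u)..(-0:ℝ), q s * f s :=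
            intervalIntegral.integral_comp_neg (fun s => q s * f s)
          rw [e1, neg_zero]
        show -g (-u) = ∫ s in (0:ℝ)..u, q (-s) * f (-s)
        rw [e, hg (-u) (hmaps u hu), intervalIntegral.integral_symm, neg_neg]
    have h2 := hneg (-x) ⟨neg_nonneg.2 h.le, by linarith [hx.1]⟩
    rwa [neg_neg] at h2


/-- If `T` is a linear operator on polynomials such that `φₖ = T[xᵏ]` is a standard
`L`-base, and `T[1] = 0`, then `T[xᵏ] = 0` for every even `k`, and consequently
`T = T∘P₋` on polynomials, where `(P₋u)(x) = (u(x)−u(−x))/2`. -/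
theorem stmt9 (a b : ℝ) (hab : a < b) (ha : a ≤ 0) (hb : 0 ≤ b)
    (q : ℝ → ℝ) (hq : IntegrableOn q (Set.Ioo a b))
    (T : Polynomial ℝ →ₗ[ℝ] (ℝ → ℝ)) (φD : ℕ → ℝ → ℝ)
    (hderiv : ∀ k : ℕ, ∀ x ∈ Set.Icc a b,
      HasDerivWithinAt (T (X ^ k)) (φD k x) (Set.Icc a b) x)
    (hbase01 : ∀ k : ℕ, k = 0 ∨ k = 1 → ∀ x ∈ Set.Icc a b,
      φD k x = φD k 0 + ∫ s in (0:ℝ)..x, q s * T (X ^ k) s)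
    (hbase : ∀ k : ℕ, 2 ≤ k → ∀ x ∈ Set.Icc a b,
      φD k x = φD k 0 + ∫ s in (0:ℝ)..x,
        (q s * T (X ^ k) s + (k : ℝ) * ((k : ℝ) - 1) * T (X ^ (k - 2)) s))
    (hzero : ∀ k : ℕ, 2 ≤ k → T (X ^ k) 0 = 0 ∧ φD k 0 = 0)
    (hT1 : T 1 = 0) :
    (∀ k : ℕ, Even k → ∀ x ∈ Set.Icc a b, T (X ^ k) x = 0) ∧
    (∀ p : Polynomial ℝ, ∀ x ∈ Set.Icc a b,
      T p x = T (Polynomial.C (1/2 : ℝ) * (p - p.comp (-X))) x) := by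
  have hqI : IntegrableOn q (Icc a b) := (integrableOn_Icc_iff_integrableOn_Ioo (f := q)).2 hq
  have h0m : (0:ℝ) ∈ Icc a b := ⟨ha, hb⟩
  have hIcc : uIcc a b = Icc a b := uIcc_of_le hab.le
  have hcontf : ∀ k : ℕ, ContinuousOn (T (X ^ k)) (Icc a b) :=
    fun k x hx => (hderiv k x hx).continuousWithinAt
  have key : ∀ m : ℕ, ∀ x ∈ Icc a b, T (X ^ (2 * m)) x = 0 := by
    intro m
    induction m with
    | zero =>
      intro x hx
      have e : ((X : Polynomial ℝ) ^ (2 * 0)) = 1 := by norm_num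
      rw [e, hT1]; rfl
    | succ n ih =>
      set k := 2 * (n + 1) with hk
      have hk2 : 2 ≤ k := by omega
      have hkm2 : k - 2 = 2 * n := by omega
      have hfc : ContinuousOn (T (X ^ k)) (Icc a b) := hcontf k
      have hf0 : T (X ^ k) 0 = 0 := (hzero k hk2).1
      have hqf : IntegrableOn (fun s => q s * T (X ^ k) s) (Icc a b) :=
        mulCont_integrableOn hqI hfc
      have hgrep : ∀ x ∈ Icc a b, φD k x = ∫ s in (0:ℝ)..x, q s * T (X ^ k) s := by
        intro x hx
        rw [hbase k hk2 x hx, (hzero k hk2).2, zero_add]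
        apply intervalIntegral.integral_congr
        intro s hs
        have hs' : s ∈ Icc a b := (uIcc_subset_Icc h0m hx) hs
        show q s * T (X ^ k) s + (k : ℝ) * ((k : ℝ) - 1) * T (X ^ (k - 2)) s
          = q s * T (X ^ k) s
        rw [hkm2, ih s hs', mul_zero, add_zero]
      have hgc : ContinuousOn (φD k) (Icc a b) := by
        have hI : IntervalIntegrable (fun s => q s * T (X ^ k) s) volume a b :=
          (hqf.mono_set (by rw [hIcc])).intervalIntegrable
        have h := intervalIntegral.continuousOn_primitive_interval' hI
          (by rw [hIcc]; exact h0m)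
        rw [hIcc] at h
        exact h.congr fun x hx => hgrep x hx
      have hgI : ∀ u v : ℝ, u ∈ Icc a b → v ∈ Icc a b →
          IntervalIntegrable (φD k) volume u v := fun u v hu hv =>
        (hgc.mono (uIcc_subset_Icc hu hv)).intervalIntegrable
      have hfrep : ∀ x ∈ Icc a b, T (X ^ k) x = ∫ s in (0:ℝ)..x, φD k s := by
        intro x hx
        rcases le_or_gt 0 x with hx0 | hx0
        · have keyI := intervalIntegral.integral_eq_sub_of_hasDeriv_right_of_le hx0
            (hfc.mono (Icc_subset_Icc ha hx.2)) ?_ (hgI 0 x h0m hx)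
          · rw [hf0, sub_zero] at keyI
            exact keyI.symm
          · intro s hs
            have hsm : s ∈ Icc a b := ⟨ha.trans hs.1.le, hs.2.le.trans hx.2⟩
            refine (hderiv k s hsm).mono_of_mem_nhdsWithin ?_
            have hsb : s < b := lt_of_lt_of_le hs.2 hx.2
            refine Filter.mem_of_superset
              (Filter.inter_mem (mem_nhdsWithin_of_mem_nhds (Iio_mem_nhds hsb))
                self_mem_nhdsWithin) ?_
            rintro y ⟨hy1, hy2⟩
            exact ⟨ha.trans (hs.1.trans hy2).le, hy1.le⟩
        · have keyI := intervalIntegral.integral_eq_sub_of_hasDeriv_right_of_le hx0.le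
            (hfc.mono (Icc_subset_Icc hx.1 hb)) ?_ (hgI x 0 hx h0m)
          · rw [hf0] at keyI
            rw [intervalIntegral.integral_symm x 0]
            linarith [keyI]
          · intro s hs
            have hsm : s ∈ Icc a b := ⟨hx.1.trans hs.1.le, hs.2.le.trans hb⟩
            refine (hderiv k s hsm).mono_of_mem_nhdsWithin ?_
            have hsb : s < b := lt_of_lt_of_le hs.2 hb
            refine Filter.mem_of_superset
              (Filter.inter_mem (mem_nhdsWithin_of_mem_nhds (Iio_mem_nhds hsb))
                self_mem_nhdsWithin) ?_
            rintro y ⟨hy1, hy2⟩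
            exact ⟨(hx.1.trans hs.1.le).trans hy2.le, hy1.le⟩
      exact uniq_two ha hb hqI hfc hfrep hgrep
  have part1 : ∀ k : ℕ, Even k → ∀ x ∈ Icc a b, T (X ^ k) x = 0 := by
    intro k hk x hx
    obtain ⟨m, hm⟩ := hk
    subst hm
    have h := key m x hx
    rwa [two_mul] at h
  refine ⟨part1, ?_⟩
  intro p x hx
  have h2 : (C (1/2 : ℝ) : Polynomial ℝ) * 2 = 1 := by
    rw [← map_ofNat (C : ℝ →+* ℝ[X]) 2, ← C_mul, ← C_1]
    norm_num
  have hzero2 : ∀ p : Polynomial ℝ, T (C (1/2 : ℝ) * (p + p.comp (-X))) x = 0 := by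
    intro p
    induction p using Polynomial.induction_on' with
    | add u v hu hv =>
      have e : C (1/2 : ℝ) * ((u + v) + (u + v).comp (-X))
          = C (1/2 : ℝ) * (u + u.comp (-X)) + C (1/2 : ℝ) * (v + v.comp (-X)) := by
        rw [Polynomial.add_comp]; ring
      rw [e, map_add]
      show T (C (1/2 : ℝ) * (u + u.comp (-X))) x + T (C (1/2 : ℝ) * (v + v.comp (-X))) x = 0
      rw [hu, hv, add_zero]
    | monomial n c =>
      rcases Nat.even_or_odd n with hn | hn
      · have e : C (1/2 : ℝ) * ((monomial n c : Polynomial ℝ) + (monomial n c).comp (-X))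
            = c • ((X : Polynomial ℝ) ^ n) := by
          rw [← C_mul_X_pow_eq_monomial, Polynomial.mul_comp, Polynomial.C_comp,
            Polynomial.pow_comp, Polynomial.X_comp, hn.neg_pow, Polynomial.smul_eq_C_mul]
          linear_combination (C c * (X : Polynomial ℝ) ^ n) * h2
        rw [e, LinearMap.map_smul]
        show (c • (T ((X : ℝ[X]) ^ n))) x = 0
        rw [Pi.smul_apply, part1 n hn x hx, smul_zero]
      · have e : C (1/2 : ℝ) * ((monomial n c : Polynomial ℝ) + (monomial n c).comp (-X))
            = 0 := by
          rw [← C_mul_X_pow_eq_monomial, Polynomial.mul_comp, Polynomial.C_comp,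
            Polynomial.pow_comp, Polynomial.X_comp, hn.neg_pow]
          ring
        rw [e, map_zero]; rfl
  have hsplit : C (1/2 : ℝ) * (p - p.comp (-X)) + C (1/2 : ℝ) * (p + p.comp (-X)) = p := by
    linear_combination (p : Polynomial ℝ) * h2
  calc T p x = T (C (1/2:ℝ) * (p - p.comp (-X)) + C (1/2:ℝ) * (p + p.comp (-X))) x := by
        rw [hsplit]
    _ = T (C (1/2:ℝ) * (p - p.comp (-X))) x + T (C (1/2:ℝ) * (p + p.comp (-X))) x := by
        rw [map_add]; rfl
    _ = T (C (1/2:ℝ) * (p - p.comp (-X))) x := by rw [hzero2 p, add_zero]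
end

section
/- If T and M are linear operators on polynomials each mapping {xᵏ} to a standard L-base (for the same potential q), and T[1] = M[1], T[x] = M[x], then T = M on all polynomials. -/
open MeasureTheory Set Polynomial intervalIntegral Filter Topology


lemma contPrim {f : ℝ → ℝ} {a b c : ℝ} (hf : IntegrableOn f (Icc a b))
    (hc : c ∈ Icc a b) : ContinuousOn (fun x => ∫ t in c..x, f t) (Icc a b) := by
  have hind : Integrable ((Icc a b).indicator f) := by
    rwa [integrable_indicator_iff measurableSet_Icc]
  have hcont := hind.continuous_primitive c
  refine ContinuousOn.congr hcont.continuousOn ?_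
  intro x hx
  refine intervalIntegral.integral_congr ?_
  intro s hs
  have : s ∈ Icc a b := Set.uIcc_subset_Icc hc hx hs
  simp [Set.indicator_of_mem this]

lemma intInt {f : ℝ → ℝ} {a b c d : ℝ} (hf : IntegrableOn f (Icc a b))
    (hc : c ∈ Icc a b) (hd : d ∈ Icc a b) : IntervalIntegrable f volume c d :=
  (hf.mono_set (Set.uIcc_subset_Icc hc hd)).intervalIntegrable

lemma rightside {b : ℝ} (hb : 0 ≤ b) {q u v : ℝ → ℝ}
    (hq : IntegrableOn q (Icc 0 b)) (hu : ContinuousOn u (Icc 0 b))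
    (hvc : ContinuousOn v (Icc 0 b))
    (hv : ∀ x ∈ Icc 0 b, v x = ∫ s in (0:ℝ)..x, q s * u s)
    (hu' : ∀ x ∈ Icc 0 b, u x = ∫ t in (0:ℝ)..x, v t) :
    ∀ x ∈ Icc 0 b, u x = 0 := by
  have h0I : (0:ℝ) ∈ Icc 0 b := ⟨le_refl _, hb⟩
  have hqu : IntegrableOn (fun s => q s * u s) (Icc 0 b) :=
    hq.mul_continuousOn hu isCompact_Icc
  set S : Set ℝ := {x | x ∈ Icc 0 b ∧ ∀ y ∈ Icc 0 x, u y = 0} with hS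
  have h0S : (0:ℝ) ∈ S := by
    refine ⟨h0I, fun y hy => ?_⟩
    have hy0 : y = 0 := le_antisymm hy.2 hy.1
    rw [hy0, hu' 0 h0I, intervalIntegral.integral_same]
  have hbdd : BddAbove S := ⟨b, fun x hx => hx.1.2⟩
  set c := sSup S with hcdef
  have hc0 : 0 ≤ c := le_csSup hbdd h0S
  have hcb : c ≤ b := csSup_le ⟨0, h0S⟩ (fun x hx => hx.1.2)
  have hcI : c ∈ Icc 0 b := ⟨hc0, hcb⟩
  have huz : ∀ y ∈ Icc 0 c, u y = 0 := by
    have hlt0 : ∀ y ∈ Ico 0 c, u y = 0 := by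
      intro y hy
      obtain ⟨x, hxS, hyx⟩ := exists_lt_of_lt_csSup ⟨0, h0S⟩ hy.2
      exact hxS.2 y ⟨hy.1, hyx.le⟩
    have hucz : u c = 0 := by
      rcases eq_or_lt_of_le hc0 with heq0 | hpos
      · rw [← heq0, hu' 0 h0I, intervalIntegral.integral_same]
      · have hcw : ContinuousWithinAt u (Ico 0 c) c :=
          (hu c hcI).mono (fun t ht => ⟨ht.1, ht.2.le.trans hcb⟩)
        have hne : (𝓝[Ico 0 c] c).NeBot := by
          apply mem_closure_iff_nhdsWithin_neBot.mp
          rw [closure_Ico (by exact hpos.ne)]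
          exact ⟨hc0, le_rfl⟩
        have h1 : Tendsto u (𝓝[Ico 0 c] c) (𝓝 (u c)) := hcw
        have h2 : Tendsto u (𝓝[Ico 0 c] c) (𝓝 0) := by
          refine Tendsto.congr' ?_ tendsto_const_nhds
          filter_upwards [self_mem_nhdsWithin] with t ht
          exact (hlt0 t ht).symm
        exact tendsto_nhds_unique h1 h2
    intro y hy
    rcases eq_or_lt_of_le hy.2 with heq | hltc
    · rw [heq]; exact hucz
    · exact hlt0 y ⟨hy.1, hltc⟩
  have hvz : ∀ t ∈ Icc 0 c, v t = 0 := by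
    intro t ht
    rw [hv t ⟨ht.1, ht.2.trans hcb⟩]
    rw [intervalIntegral.integral_congr (g := fun _ => (0:ℝ))
      (fun s hs => by
        rw [Set.uIcc_of_le ht.1] at hs
        rw [huz s ⟨hs.1, hs.2.trans ht.2⟩, mul_zero])]
    simp
  rcases eq_or_lt_of_le hcb with heq | hlt
  · intro x hx; exact huz x ⟨hx.1, heq ▸ hx.2⟩
  · exfalso
    have hqabs : IntegrableOn (fun t => |q t|) (Icc 0 b) := by
      simpa [Real.norm_eq_abs, IntegrableOn] using hq.norm
    set Q : ℝ → ℝ := fun x => ∫ t in c..x, |q t| with hQdef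
    have hQc : ContinuousOn Q (Icc 0 b) := contPrim hqabs hcI
    set ε : ℝ := 1 / (2 * (b + 1)) with hεdef
    have hεpos : 0 < ε := by positivity
    have hQten : Tendsto Q (𝓝[Icc 0 b] c) (𝓝 0) := by
      have := hQc c hcI
      simpa [ContinuousWithinAt, hQdef, intervalIntegral.integral_same] using this
    have hev : ∀ᶠ x in 𝓝[Icc 0 b] c, Q x < ε :=
      hQten.eventually (eventually_lt_nhds hεpos)
    obtain ⟨δ₀, hδ₀, hball⟩ := Metric.mem_nhdsWithin_iff.mp hev
    set δ : ℝ := min (δ₀ / 2) (b - c) with hδdef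
    have hδpos : 0 < δ := lt_min (by linarith) (by linarith)
    have hδb : c + δ ≤ b := by
      have := min_le_right (δ₀ / 2) (b - c); simp only [hδdef]; linarith
    have hJsub : Icc c (c + δ) ⊆ Icc 0 b := fun t ht => ⟨hc0.trans ht.1, ht.2.trans hδb⟩
    have hkey : ∀ x ∈ Icc c (c + δ), Q x ≤ ε := by
      intro x hx
      refine le_of_lt (hball ⟨?_, hJsub hx⟩)
      rw [Metric.mem_ball, Real.dist_eq, abs_of_nonneg (by linarith [hx.1])]
      have h1 : x - c ≤ δ := by linarith [hx.2]
      have h2 : δ ≤ δ₀ / 2 := min_le_left _ _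
      linarith
    obtain ⟨x₀, hx₀J, hmax⟩ := isCompact_Icc.exists_isMaxOn
      (Set.nonempty_Icc.mpr (by linarith)) ((hu.mono hJsub).abs)
    set m : ℝ := |u x₀| with hmdef
    have hm0 : 0 ≤ m := abs_nonneg _
    have hub : ∀ s ∈ Icc c (c + δ), |u s| ≤ m := fun s hs => hmax hs
    have claim : ∀ x ∈ Icc c (c + δ), |u x| ≤ ε * m * δ := by
      intro x hx
      have hx0b : x ∈ Icc 0 b := hJsub hx
      have hsplit : u x = ∫ t in c..x, v t := by
        rw [hu' x hx0b,
          ← intervalIntegral.integral_add_adjacent_intervals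
            ((hvc.mono (Set.uIcc_subset_Icc h0I hcI)).intervalIntegrable)
            ((hvc.mono (Set.uIcc_subset_Icc hcI hx0b)).intervalIntegrable)]
        have : (∫ t in (0:ℝ)..c, v t) = 0 := by
          rw [intervalIntegral.integral_congr (g := fun _ => (0:ℝ))
            (fun s hs => by
              rw [Set.uIcc_of_le hc0] at hs
              exact hvz s hs)]
          simp
        rw [this, zero_add]
      have vbound : ∀ t ∈ Set.uIoc c x, ‖v t‖ ≤ ε * m := by
        intro t ht
        rw [Set.uIoc_of_le hx.1] at ht
        have htI : t ∈ Icc c (c + δ) := ⟨ht.1.le, ht.2.trans hx.2⟩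
        have ht0b : t ∈ Icc 0 b := hJsub htI
        have hvt : v t = ∫ s in c..t, q s * u s := by
          rw [hv t ht0b,
            ← intervalIntegral.integral_add_adjacent_intervals
              (intInt hqu h0I hcI) (intInt hqu hcI ht0b)]
          have : (∫ s in (0:ℝ)..c, q s * u s) = 0 := by
            rw [intervalIntegral.integral_congr (g := fun _ => (0:ℝ))
              (fun s hs => by
                rw [Set.uIcc_of_le hc0] at hs
                rw [huz s hs, mul_zero])]
            simp
          rw [this, zero_add]
        rw [hvt, Real.norm_eq_abs]
        have hct : c ≤ t := ht.1.le
        calc |∫ s in c..t, q s * u s| ≤ ∫ s in c..t, |q s * u s| := by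
              apply intervalIntegral.abs_integral_le_integral_abs hct
          _ ≤ ∫ s in c..t, |q s| * m := by
              apply intervalIntegral.integral_mono_on hct
              · exact ((intInt hqu hcI ht0b)).abs
              · exact ((intInt hqabs hcI ht0b)).mul_const m
              · intro s hs
                rw [abs_mul]
                exact mul_le_mul_of_nonneg_left
                  (hub s ⟨hs.1, hs.2.trans htI.2⟩) (abs_nonneg _)
          _ = Q t * m := by rw [intervalIntegral.integral_mul_const]
          _ ≤ ε * m := mul_le_mul_of_nonneg_right (hkey t htI) hm0
      calc |u x| = ‖∫ t in c..x, v t‖ := by rw [hsplit, Real.norm_eq_abs]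
        _ ≤ ε * m * |x - c| := intervalIntegral.norm_integral_le_of_norm_le_const vbound
        _ ≤ ε * m * δ := by
            apply mul_le_mul_of_nonneg_left _ (by positivity)
            rw [abs_of_nonneg (by linarith [hx.1])]
            linarith [hx.2]
    have hm_le : m ≤ ε * m * δ := claim x₀ hx₀J
    have hεδ : ε * δ ≤ 1 / 2 := by
      have hδle : δ ≤ b := le_trans (min_le_right _ _) (by linarith)
      rw [hεdef]
      rw [div_mul_eq_mul_div, one_mul, div_le_div_iff₀ (by linarith) (by norm_num)]
      linarith
    have hmz : m = 0 := by
      by_contra hne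
      have hmpos : 0 < m := lt_of_le_of_ne hm0 (Ne.symm hne)
      have : ε * m * δ ≤ m / 2 := by
        have : ε * δ * m ≤ (1/2) * m := mul_le_mul_of_nonneg_right hεδ hm0
        nlinarith
      linarith
    have hcδS : c + δ ∈ S := by
      refine ⟨⟨by linarith, hδb⟩, fun y hy => ?_⟩
      rcases le_total y c with h | h
      · exact huz y ⟨hy.1, h⟩
      · have := claim y ⟨h, hy.2⟩
        rw [hmz] at this
        simp only [mul_zero, zero_mul] at this
        exact abs_nonpos_iff.mp this
    have := le_csSup hbdd hcδS
    linarith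

lemma bothside {a b : ℝ} (ha : a ≤ 0) (hb : 0 ≤ b) {q u v : ℝ → ℝ}
    (hq : IntegrableOn q (Icc a b)) (hu : ContinuousOn u (Icc a b))
    (hvc : ContinuousOn v (Icc a b))
    (hv : ∀ x ∈ Icc a b, v x = ∫ s in (0:ℝ)..x, q s * u s)
    (hu' : ∀ x ∈ Icc a b, u x = ∫ t in (0:ℝ)..x, v t) :
    ∀ x ∈ Icc a b, u x = 0 := by
  have h0I : (0:ℝ) ∈ Icc a b := ⟨ha, hb⟩
  have hsubR : Icc (0:ℝ) b ⊆ Icc a b := Icc_subset_Icc_left ha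
  have hR : ∀ x ∈ Icc (0:ℝ) b, u x = 0 :=
    rightside hb (hq.mono_set hsubR) (hu.mono hsubR) (hvc.mono hsubR)
      (fun x hx => hv x (hsubR hx)) (fun x hx => hu' x (hsubR hx))
  -- left side via reflection
  have hmap : ∀ x ∈ Icc (0:ℝ) (-a), -x ∈ Icc a b := by
    intro x hx
    exact ⟨by linarith [hx.2], by linarith [hx.1]⟩
  have hqn : IntegrableOn (fun s => q (-s)) (Icc 0 (-a)) := by
    have h1 : IntervalIntegrable q volume a 0 :=
      (hq.mono_set (by rw [Set.uIcc_of_le ha]; exact Icc_subset_Icc le_rfl hb)).intervalIntegrable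
    have h2 : IntervalIntegrable (fun x => q (-x)) volume (-a) (-0) :=
      (IntervalIntegrable.iff_comp_neg (by simp)).mp h1
    rw [neg_zero] at h2
    rw [integrableOn_Icc_iff_integrableOn_Ioc]
    exact (intervalIntegrable_iff_integrableOn_Ioc_of_le (by linarith)).mp h2.symm
  have hcont_neg : Continuous (fun x : ℝ => -x) := continuous_neg
  have hun : ContinuousOn (fun x => u (-x)) (Icc 0 (-a)) :=
    hu.comp hcont_neg.continuousOn hmap
  have hvn : ContinuousOn (fun x => -v (-x)) (Icc 0 (-a)) :=
    (hvc.comp hcont_neg.continuousOn hmap).neg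
  have hvf : ∀ x ∈ Icc (0:ℝ) (-a), (fun x => -v (-x)) x
      = ∫ s in (0:ℝ)..x, q (-s) * u (-s) := by
    intro x hx
    have : (∫ s in (0:ℝ)..x, q (-s) * u (-s))
        = ∫ s in (-x)..(0:ℝ), q s * u s := by
      simpa using intervalIntegral.integral_comp_neg (a := 0) (b := x)
        (f := fun s => q s * u s)
    rw [this, intervalIntegral.integral_symm, ← hv (-x) (hmap x hx)]
  have huf : ∀ x ∈ Icc (0:ℝ) (-a), (fun x => u (-x)) x
      = ∫ t in (0:ℝ)..x, -v (-t) := by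
    intro x hx
    have : (∫ t in (0:ℝ)..x, v (-t)) = ∫ t in (-x)..(0:ℝ), v t := by
      simpa using intervalIntegral.integral_comp_neg (a := 0) (b := x) (f := v)
    rw [intervalIntegral.integral_neg, this, intervalIntegral.integral_symm,
      neg_neg, ← hu' (-x) (hmap x hx)]
  have hL := rightside (by linarith) hqn hun hvn hvf huf
  intro x hx
  rcases le_total 0 x with h | h
  · exact hR x ⟨h, hx.2⟩
  · have := hL (-x) ⟨by linarith, by linarith [hx.1]⟩
    simpa using this

/-- If `T` and `M` are linear operators on polynomials, each mapping `{xᵏ}` to a standard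
`L`-base for the same potential `q`, and `T[1] = M[1]`, `T[x] = M[x]`, then `T = M`
on all polynomials. -/
theorem stmt11 (a b : ℝ) (hab : a < b) (ha : a ≤ 0) (hb : 0 ≤ b)
    (q : ℝ → ℝ) (hq : IntegrableOn q (Set.Ioo a b))
    (T M : Polynomial ℝ →ₗ[ℝ] (ℝ → ℝ)) (φD ψD : ℕ → ℝ → ℝ)
    -- `{T[xᵏ]}` is a standard `L`-base
    (hderivT : ∀ k : ℕ, ∀ x ∈ Set.Icc a b,
      HasDerivWithinAt (T (X ^ k)) (φD k x) (Set.Icc a b) x)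
    (hbase01T : ∀ k : ℕ, k = 0 ∨ k = 1 → ∀ x ∈ Set.Icc a b,
      φD k x = φD k 0 + ∫ s in (0:ℝ)..x, q s * T (X ^ k) s)
    (hbaseT : ∀ k : ℕ, 2 ≤ k → ∀ x ∈ Set.Icc a b,
      φD k x = φD k 0 + ∫ s in (0:ℝ)..x,
        (q s * T (X ^ k) s + (k : ℝ) * ((k : ℝ) - 1) * T (X ^ (k - 2)) s))
    (hzeroT : ∀ k : ℕ, 2 ≤ k → T (X ^ k) 0 = 0 ∧ φD k 0 = 0)
    -- `{M[xᵏ]}` is a standard `L`-base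
    (hderivM : ∀ k : ℕ, ∀ x ∈ Set.Icc a b,
      HasDerivWithinAt (M (X ^ k)) (ψD k x) (Set.Icc a b) x)
    (hbase01M : ∀ k : ℕ, k = 0 ∨ k = 1 → ∀ x ∈ Set.Icc a b,
      ψD k x = ψD k 0 + ∫ s in (0:ℝ)..x, q s * M (X ^ k) s)
    (hbaseM : ∀ k : ℕ, 2 ≤ k → ∀ x ∈ Set.Icc a b,
      ψD k x = ψD k 0 + ∫ s in (0:ℝ)..x,
        (q s * M (X ^ k) s + (k : ℝ) * ((k : ℝ) - 1) * M (X ^ (k - 2)) s))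
    (hzeroM : ∀ k : ℕ, 2 ≤ k → M (X ^ k) 0 = 0 ∧ ψD k 0 = 0)
    (h1 : T 1 = M 1) (hX : T X = M X) :
    ∀ p : Polynomial ℝ, ∀ x ∈ Set.Icc a b, T p x = M p x := by
  have h0I : (0:ℝ) ∈ Icc a b := ⟨ha, hb⟩
  have hqIcc : IntegrableOn q (Icc a b) :=
    (integrableOn_Icc_iff_integrableOn_Ioo).mpr hq
  have key : ∀ k : ℕ, ∀ x ∈ Set.Icc a b, T (X ^ k) x = M (X ^ k) x := by
    intro k
    induction k using Nat.strong_induction_on with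
    | _ k ih =>
      rcases lt_or_ge k 2 with hk | hk
      · interval_cases k
        · intro x hx; rw [pow_zero, h1]
        · intro x hx; rw [pow_one, hX]
      · have ih2 := ih (k - 2) (by omega)
        set c : ℝ := (k : ℝ) * ((k : ℝ) - 1) with hcdef
        have hcontT : ContinuousOn (T (X ^ k)) (Icc a b) :=
          fun x hx => (hderivT k x hx).continuousWithinAt
        have hcontM : ContinuousOn (M (X ^ k)) (Icc a b) :=
          fun x hx => (hderivM k x hx).continuousWithinAt
        have hcontT2 : ContinuousOn (T (X ^ (k - 2))) (Icc a b) :=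
          fun x hx => (hderivT (k - 2) x hx).continuousWithinAt
        have hcontM2 : ContinuousOn (M (X ^ (k - 2))) (Icc a b) :=
          fun x hx => (hderivM (k - 2) x hx).continuousWithinAt
        set u : ℝ → ℝ := fun x => T (X ^ k) x - M (X ^ k) x with hudef
        set v : ℝ → ℝ := fun x => φD k x - ψD k x with hvdef
        have hu : ContinuousOn u (Icc a b) := hcontT.sub hcontM
        have hA : IntegrableOn
            (fun s => q s * T (X ^ k) s + c * T (X ^ (k - 2)) s) (Icc a b) :=
          (hqIcc.mul_continuousOn hcontT isCompact_Icc).add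
            ((continuousOn_const.mul hcontT2).integrableOn_Icc)
        have hB : IntegrableOn
            (fun s => q s * M (X ^ k) s + c * M (X ^ (k - 2)) s) (Icc a b) :=
          (hqIcc.mul_continuousOn hcontM isCompact_Icc).add
            ((continuousOn_const.mul hcontM2).integrableOn_Icc)
        have hqu : IntegrableOn (fun s => q s * u s) (Icc a b) :=
          hqIcc.mul_continuousOn hu isCompact_Icc
        have hv : ∀ x ∈ Icc a b, v x = ∫ s in (0:ℝ)..x, q s * u s := by
          intro x hx
          have e1 := hbaseT k hk x hx
          have e2 := hbaseM k hk x hx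
          rw [(hzeroT k hk).2, zero_add] at e1
          rw [(hzeroM k hk).2, zero_add] at e2
          rw [hvdef]
          simp only []
          rw [e1, e2, ← intervalIntegral.integral_sub
            (intInt hA h0I hx) (intInt hB h0I hx)]
          apply intervalIntegral.integral_congr
          intro s hs
          have hsI : s ∈ Icc a b := Set.uIcc_subset_Icc h0I hx hs
          simp only [hudef]
          rw [ih2 s hsI]
          ring
        have hvc : ContinuousOn v (Icc a b) :=
          (contPrim hqu h0I).congr hv
        have hu0 : u 0 = 0 := by
          simp only [hudef, (hzeroT k hk).1, (hzeroM k hk).1, sub_zero]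
        have hderivu : ∀ t ∈ Icc a b, HasDerivWithinAt u (v t) (Icc a b) t :=
          fun t ht => (hderivT k t ht).sub (hderivM k t ht)
        have hvint : IntegrableOn v (Icc a b) := hvc.integrableOn_Icc
        have hu' : ∀ x ∈ Icc a b, u x = ∫ t in (0:ℝ)..x, v t := by
          intro x hx
          have hderivAt : ∀ t ∈ Ioo a b, HasDerivWithinAt u (v t) (Ioi t) t := by
            intro t ht
            exact (((hderivu t (Ioo_subset_Icc_self ht)).hasDerivAt
              (Icc_mem_nhds ht.1 ht.2))).hasDerivWithinAt
          rcases le_total 0 x with h | h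
          · have := intervalIntegral.integral_eq_sub_of_hasDeriv_right_of_le h
              (hu.mono (Icc_subset_Icc ha hx.2))
              (fun t ht => hderivAt t ⟨lt_of_le_of_lt ha ht.1, lt_of_lt_of_le ht.2 hx.2⟩)
              (intInt hvint h0I hx)
            rw [this, hu0, sub_zero]
          · have := intervalIntegral.integral_eq_sub_of_hasDeriv_right_of_le h
              (hu.mono (Icc_subset_Icc hx.1 hb))
              (fun t ht => hderivAt t ⟨lt_of_le_of_lt hx.1 ht.1, lt_of_lt_of_le ht.2 hb⟩)
              (intInt hvint hx h0I)
            rw [intervalIntegral.integral_symm, this, hu0, zero_sub, neg_neg]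
        have := bothside ha hb hqIcc hu hvc hv hu'
        intro x hx
        have hx0 := this x hx
        simp only [hudef] at hx0
        linarith
  intro p x hx
  have hrepr := Polynomial.as_sum_range' p (p.natDegree + 1) (Nat.lt_succ_self _)
  rw [hrepr, map_sum, map_sum]
  simp only [Finset.sum_apply]
  refine Finset.sum_congr rfl ?_
  intro i _
  have hmono : (monomial i (p.coeff i) : Polynomial ℝ) = p.coeff i • X ^ i := by
    rw [Polynomial.smul_eq_C_mul, Polynomial.C_mul_X_pow_eq_monomial]
  rw [hmono, LinearMap.map_smul, LinearMap.map_smul]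
  simp only [Pi.smul_apply, smul_eq_mul]
  rw [key i x hx]
end

section
/- Let q ∈ L¹(−a,a) and let Ω₁ be the closed square in the (u,v)-plane with vertices (−a,0),(0,a),(a,0),(0,−a). Then the Volterra integral equation H(u,v) = (1/2)∫₀ᵘ q(s) ds + ∫₀ᵘ∫₀ᵛ q(α+β) H(α,β) dβ dα has a unique continuous solution H on Ω₁, and it satisfies |H(u,v)| ≤ ‖q‖_{L¹} · exp(a‖q‖_{L¹}) for all (u,v) ∈ Ω₁. -/
set_option maxHeartbeats 1000000

open MeasureTheory Set Filter
open scoped Interval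

namespace Stmt13Aux

lemma mem_uIcc_abs {x y : ℝ} (h : x ∈ uIcc 0 y) : |x| ≤ |y| := by
  rcases le_total 0 y with hy | hy
  · rw [uIcc_of_le hy] at h
    rw [abs_of_nonneg h.1, abs_of_nonneg hy]; exact h.2
  · rw [uIcc_of_ge hy] at h
    rw [abs_of_nonpos h.2, abs_of_nonpos hy]; linarith [h.1]

lemma aesm_shift {q0 : ℝ → ℝ} (hq : AEStronglyMeasurable q0 (volume : Measure ℝ)) :
    AEStronglyMeasurable (fun p : ℝ × ℝ => q0 (p.1 + p.2)) (volume : Measure (ℝ × ℝ)) := by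
  obtain ⟨q1, hq1m, hq1e⟩ := hq
  obtain ⟨N, hNsub, hNm, hN0⟩ := exists_measurable_superset_of_null (ae_iff.mp hq1e)
  refine ⟨fun p => q1 (p.1 + p.2), hq1m.comp_measurable (measurable_fst.add measurable_snd), ?_⟩
  have hpre : (volume : Measure (ℝ × ℝ)) ((fun p : ℝ × ℝ => p.1 + p.2) ⁻¹' N) = 0 := by
    rw [Measure.volume_eq_prod, Measure.prod_apply (s := (fun p : ℝ × ℝ => p.1 + p.2) ⁻¹' N) ((measurable_fst.add measurable_snd) hNm)]
    have h0 : ∀ α : ℝ, (volume : Measure ℝ)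
        (Prod.mk α ⁻¹' ((fun p : ℝ × ℝ => p.1 + p.2) ⁻¹' N)) = 0 := by
      intro α
      have he : Prod.mk α ⁻¹' ((fun p : ℝ × ℝ => p.1 + p.2) ⁻¹' N)
          = (fun β => α + β) ⁻¹' N := rfl
      rw [he, measure_preimage_add]
      exact hN0
    simp [h0]
  rw [EventuallyEq, ae_iff]
  exact measure_mono_null (fun p hp => hNsub hp) hpre

lemma integrableOn_shift {q0 : ℝ → ℝ} (hq : Integrable q0) {s t : Set ℝ}
    (hsf : volume s ≠ ⊤) :
    IntegrableOn (fun p : ℝ × ℝ => q0 (p.1 + p.2)) (s ×ˢ t) := by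
  have hmeas : AEStronglyMeasurable (fun p : ℝ × ℝ => q0 (p.1 + p.2))
      ((volume.restrict s).prod (volume.restrict t)) := by
    rw [Measure.prod_restrict, ← Measure.volume_eq_prod]
    exact (aesm_shift hq.aestronglyMeasurable).restrict
  rw [IntegrableOn, Measure.volume_eq_prod, ← Measure.prod_restrict]
  rw [integrable_prod_iff hmeas]
  refine ⟨ae_of_all _ fun α => (hq.comp_add_left α).integrableOn, ?_⟩
  refine Integrable.mono' (g := fun _ => ∫ x, |q0 x|)
      (integrableOn_const hsf)
      hmeas.norm.integral_prod_right' (ae_of_all _ fun α => ?_)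
  have h1 : Integrable (fun β => q0 (α + β)) volume := hq.comp_add_left α
  calc ‖∫ β in t, ‖q0 (α + β)‖‖ = ∫ β in t, |q0 (α + β)| := by
        rw [Real.norm_of_nonneg (integral_nonneg fun β => norm_nonneg _)]
        simp [Real.norm_eq_abs]
    _ ≤ ∫ β, |q0 (α + β)| :=
        setIntegral_le_integral h1.abs (ae_of_all _ fun β => abs_nonneg _)
    _ = ∫ x, |q0 x| := integral_add_left_eq_self (fun x => |q0 x|) α

lemma integrableOn_shift_mul {q0 : ℝ → ℝ} (hq : Integrable q0) {w : ℝ × ℝ → ℝ}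
    (hw : Continuous w) {Cw : ℝ} (hbd : ∀ p, |w p| ≤ Cw) {s t : Set ℝ}
    (hsf : volume s ≠ ⊤) :
    IntegrableOn (fun p : ℝ × ℝ => q0 (p.1 + p.2) * w p) (s ×ˢ t) := by
  have base := integrableOn_shift hq (t := t) hsf
  refine Integrable.mono' (base.norm.mul_const Cw)
      (base.aestronglyMeasurable.mul hw.aestronglyMeasurable.restrict)
      (ae_of_all _ fun p => ?_)
  rw [Real.norm_eq_abs, abs_mul]
  exact mul_le_mul_of_nonneg_left (hbd p) (abs_nonneg _) |>.trans
    (le_of_eq (by rw [Real.norm_eq_abs]))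

lemma uIoc_finite (u1 u2 : ℝ) : (volume : Measure ℝ) (Ι u1 u2) ≠ ⊤ := by
  rw [uIoc]; exact measure_Ioc_lt_top.ne

lemma inner_II {q0 : ℝ → ℝ} (hq : Integrable q0) {w : ℝ × ℝ → ℝ}
    (hw : Continuous w) (α v1 v2 : ℝ) :
    IntervalIntegrable (fun β => q0 (α + β) * w (α, β)) volume v1 v2 :=
  (hq.comp_add_left α).intervalIntegrable.mul_continuousOn
    (Continuous.continuousOn (hw.comp (continuous_const.prodMk continuous_id)))

lemma inner_bound {q0 : ℝ → ℝ} (hq : Integrable q0) {w : ℝ × ℝ → ℝ}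
    (hw : Continuous w) {c : ℝ} (hc : 0 ≤ c) (α v1 v2 : ℝ)
    (h : ∀ β ∈ uIcc v1 v2, |w (α, β)| ≤ c) :
    |∫ β in v1..v2, q0 (α + β) * w (α, β)| ≤ c * ∫ x, |q0 x| := by
  have hII := inner_II hq hw α v1 v2
  have h1 : Integrable (fun β => q0 (α + β)) volume := hq.comp_add_left α
  calc |∫ β in v1..v2, q0 (α + β) * w (α, β)|
      = ‖∫ β in v1..v2, q0 (α + β) * w (α, β)‖ := (Real.norm_eq_abs _).symm
    _ ≤ ∫ β in Ι v1 v2, ‖q0 (α + β) * w (α, β)‖ :=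
        intervalIntegral.norm_integral_le_integral_norm_uIoc
    _ ≤ ∫ β in Ι v1 v2, |q0 (α + β)| * c := by
        refine setIntegral_mono_on (intervalIntegrable_iff.mp hII.norm)
          ((h1.abs.mul_const c).integrableOn) measurableSet_uIoc (fun β hβ => ?_)
        rw [Real.norm_eq_abs, abs_mul]
        exact mul_le_mul_of_nonneg_left (h β (uIoc_subset_uIcc hβ)) (abs_nonneg _)
    _ = (∫ β in Ι v1 v2, |q0 (α + β)|) * c := by rw [integral_mul_const]
    _ ≤ (∫ β, |q0 (α + β)|) * c := by
        refine mul_le_mul_of_nonneg_right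
          (setIntegral_le_integral h1.abs (ae_of_all _ fun β => abs_nonneg _)) hc
    _ = c * ∫ x, |q0 x| := by
        rw [integral_add_left_eq_self (fun x => |q0 x|) α, mul_comm]

lemma inner_bound' {q0 : ℝ → ℝ} (hq : Integrable q0) {w : ℝ × ℝ → ℝ}
    (hw : Continuous w) {c : ℝ} (hc : 0 ≤ c) (β u1 u2 : ℝ)
    (h : ∀ α ∈ uIcc u1 u2, |w (α, β)| ≤ c) :
    |∫ α in u1..u2, q0 (α + β) * w (α, β)| ≤ c * ∫ x, |q0 x| := by
  have h1 : Integrable (fun α => q0 (α + β)) volume := hq.comp_add_right β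
  have hII : IntervalIntegrable (fun α => q0 (α + β) * w (α, β)) volume u1 u2 :=
    h1.intervalIntegrable.mul_continuousOn
      (Continuous.continuousOn (hw.comp (continuous_id.prodMk continuous_const)))
  calc |∫ α in u1..u2, q0 (α + β) * w (α, β)|
      = ‖∫ α in u1..u2, q0 (α + β) * w (α, β)‖ := (Real.norm_eq_abs _).symm
    _ ≤ ∫ α in Ι u1 u2, ‖q0 (α + β) * w (α, β)‖ :=
        intervalIntegral.norm_integral_le_integral_norm_uIoc
    _ ≤ ∫ α in Ι u1 u2, |q0 (α + β)| * c := by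
        refine setIntegral_mono_on (intervalIntegrable_iff.mp hII.norm)
          ((h1.abs.mul_const c).integrableOn) measurableSet_uIoc (fun α hα => ?_)
        rw [Real.norm_eq_abs, abs_mul]
        exact mul_le_mul_of_nonneg_left (h α (uIoc_subset_uIcc hα)) (abs_nonneg _)
    _ = (∫ α in Ι u1 u2, |q0 (α + β)|) * c := by rw [integral_mul_const]
    _ ≤ (∫ α, |q0 (α + β)|) * c := by
        refine mul_le_mul_of_nonneg_right
          (setIntegral_le_integral h1.abs (ae_of_all _ fun α => abs_nonneg _)) hc
    _ = c * ∫ x, |q0 x| := by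
        rw [integral_add_right_eq_self (fun x => |q0 x|) β, mul_comm]

lemma outer_II {q0 : ℝ → ℝ} (hq : Integrable q0) {w : ℝ × ℝ → ℝ}
    (hw : Continuous w) {Cw : ℝ} (hbd : ∀ p, |w p| ≤ Cw) (u1 u2 v1 v2 : ℝ) :
    IntervalIntegrable (fun α => ∫ β in v1..v2, q0 (α + β) * w (α, β)) volume u1 u2 := by
  have key : IntegrableOn (fun α => ∫ β in Ι v1 v2, q0 (α + β) * w (α, β)) (Ι u1 u2) := by
    have h := integrableOn_shift_mul hq hw hbd (s := Ι u1 u2) (t := Ι v1 v2)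
      (uIoc_finite u1 u2)
    rw [IntegrableOn, Measure.volume_eq_prod, ← Measure.prod_restrict] at h
    exact h.integral_prod_left
  rw [intervalIntegrable_iff]
  have he : (fun α => ∫ β in v1..v2, q0 (α + β) * w (α, β))
      = fun α => (if v1 ≤ v2 then (1:ℝ) else -1) * ∫ β in Ι v1 v2, q0 (α + β) * w (α, β) := by
    funext α; rw [intervalIntegral.intervalIntegral_eq_integral_uIoc, smul_eq_mul]
  rw [he]
  exact key.const_mul _

lemma swap {q0 : ℝ → ℝ} (hq : Integrable q0) {w : ℝ × ℝ → ℝ}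
    (hw : Continuous w) {Cw : ℝ} (hbd : ∀ p, |w p| ≤ Cw) (u1 u2 v1 v2 : ℝ) :
    ∫ α in u1..u2, ∫ β in v1..v2, q0 (α + β) * w (α, β)
      = ∫ β in v1..v2, ∫ α in u1..u2, q0 (α + β) * w (α, β) := by
  have h := integrableOn_shift_mul hq hw hbd (s := Ι u1 u2) (t := Ι v1 v2) (uIoc_finite u1 u2)
  rw [IntegrableOn, Measure.volume_eq_prod, ← Measure.prod_restrict] at h
  have hs := MeasureTheory.integral_integral_swap
    (f := fun α β => q0 (α + β) * w (α, β)) h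
  simp_rw [intervalIntegral.intervalIntegral_eq_integral_uIoc, integral_smul]
  rw [hs, smul_comm]

lemma int_abs_pow (u : ℝ) (n : ℕ) :
    ∫ α in Ι (0:ℝ) u, |α| ^ n = |u| ^ (n + 1) / ((n : ℝ) + 1) := by
  rcases le_total 0 u with h | h
  · rw [uIoc_of_le h, ← intervalIntegral.integral_of_le h]
    rw [intervalIntegral.integral_congr (g := fun α : ℝ => α ^ n)
      (fun α hα => by rw [uIcc_of_le h] at hα; rw [abs_of_nonneg hα.1])]
    rw [integral_pow]
    rw [abs_of_nonneg h]
    ring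
  · rw [uIoc_of_ge h, ← intervalIntegral.integral_of_le h]
    rw [intervalIntegral.integral_congr (g := fun α : ℝ => (-α) ^ n)
      (fun α hα => by rw [uIcc_of_le h] at hα; rw [abs_of_nonpos hα.2])]
    rw [intervalIntegral.integral_comp_neg (fun x : ℝ => x ^ n)]
    rw [neg_zero, integral_pow]
    rw [abs_of_nonpos h]
    ring

lemma EST {q0 : ℝ → ℝ} (hq : Integrable q0) {w : ℝ × ℝ → ℝ}
    (hw : Continuous w) {Cw : ℝ} (hbd : ∀ p, |w p| ≤ Cw) (n : ℕ) {c : ℝ} (hc : 0 ≤ c)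
    (u v : ℝ)
    (hwb : ∀ α ∈ uIcc (0:ℝ) u, ∀ β ∈ uIcc (0:ℝ) v, |w (α, β)| ≤ c * |α| ^ n) :
    |∫ α in (0:ℝ)..u, ∫ β in (0:ℝ)..v, q0 (α + β) * w (α, β)|
      ≤ c * (∫ x, |q0 x|) * |u| ^ (n + 1) / ((n : ℝ) + 1) := by
  have hM0 : 0 ≤ ∫ x, |q0 x| := integral_nonneg fun x => abs_nonneg _
  have hoI := outer_II hq hw hbd 0 u 0 v
  calc |∫ α in (0:ℝ)..u, ∫ β in (0:ℝ)..v, q0 (α + β) * w (α, β)|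
      = ‖∫ α in (0:ℝ)..u, ∫ β in (0:ℝ)..v, q0 (α + β) * w (α, β)‖ := (Real.norm_eq_abs _).symm
    _ ≤ ∫ α in Ι (0:ℝ) u, ‖∫ β in (0:ℝ)..v, q0 (α + β) * w (α, β)‖ :=
        intervalIntegral.norm_integral_le_integral_norm_uIoc
    _ ≤ ∫ α in Ι (0:ℝ) u, c * |α| ^ n * ∫ x, |q0 x| := by
        refine setIntegral_mono_on (intervalIntegrable_iff.mp hoI.norm)
          ?_ measurableSet_uIoc (fun α hα => ?_)
        · exact (((continuous_const.mul ((continuous_abs).pow n)).mul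
            continuous_const).intervalIntegrable 0 u).def'
        · rw [Real.norm_eq_abs]
          exact inner_bound hq hw (by positivity) α 0 v
            (fun β hβ => hwb α (uIoc_subset_uIcc hα) β hβ)
    _ = c * (∫ x, |q0 x|) * ∫ α in Ι (0:ℝ) u, |α| ^ n := by
        have he : ∀ α : ℝ, c * |α| ^ n * (∫ x, |q0 x|) = (c * ∫ x, |q0 x|) * |α| ^ n :=
          fun α => by ring
        simp_rw [he]
        rw [integral_const_mul]
    _ = c * (∫ x, |q0 x|) * (|u| ^ (n + 1) / ((n : ℝ) + 1)) := by rw [int_abs_pow]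
    _ = c * (∫ x, |q0 x|) * |u| ^ (n + 1) / ((n : ℝ) + 1) := by ring

lemma contDouble {q0 : ℝ → ℝ} (hq : Integrable q0) {w : ℝ × ℝ → ℝ}
    (hw : Continuous w) {Cw : ℝ} (hbd : ∀ p, |w p| ≤ Cw) :
    Continuous fun p : ℝ × ℝ => ∫ α in (0:ℝ)..p.1, ∫ β in (0:ℝ)..p.2, q0 (α + β) * w (α, β) := by
  have hM0 : 0 ≤ ∫ x, |q0 x| := integral_nonneg fun x => abs_nonneg _
  have hCw : 0 ≤ Cw := le_trans (abs_nonneg _) (hbd (0, 0))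
  set M : ℝ := ∫ x, |q0 x| with hM
  set F : ℝ × ℝ → ℝ := fun p => ∫ α in (0:ℝ)..p.1, ∫ β in (0:ℝ)..p.2, q0 (α + β) * w (α, β)
    with hF
  have key : ∀ p p' : ℝ × ℝ, |F p - F p'| ≤ Cw * M * (|p.1 - p'.1| + |p.2 - p'.2|) := by
    rintro ⟨u, v⟩ ⟨u', v'⟩
    have part1 : |F (u, v) - F (u', v)| ≤ Cw * M * |u - u'| := by
      have he : F (u, v) - F (u', v) = ∫ α in u'..u, ∫ β in (0:ℝ)..v, q0 (α + β) * w (α, β) :=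
        intervalIntegral.integral_interval_sub_left (outer_II hq hw hbd 0 u 0 v)
          (outer_II hq hw hbd 0 u' 0 v)
      rw [he]
      have := intervalIntegral.norm_integral_le_of_norm_le_const
        (f := fun α => ∫ β in (0:ℝ)..v, q0 (α + β) * w (α, β)) (a := u') (b := u)
        (C := Cw * M) (fun α _ => by
          rw [Real.norm_eq_abs]
          exact inner_bound hq hw hCw α 0 v fun β _ => hbd (α, β))
      rw [Real.norm_eq_abs] at this
      exact this.trans (le_of_eq (by rw [abs_sub_comm]))
    have part2 : |F (u', v) - F (u', v')| ≤ Cw * M * |v - v'| := by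
      have he : F (u', v) - F (u', v')
          = ∫ α in (0:ℝ)..u', ∫ β in v'..v, q0 (α + β) * w (α, β) := by
        rw [← intervalIntegral.integral_sub (outer_II hq hw hbd 0 u' 0 v)
          (outer_II hq hw hbd 0 u' 0 v')]
        refine intervalIntegral.integral_congr fun α _ => ?_
        exact intervalIntegral.integral_interval_sub_left (inner_II hq hw α 0 v)
          (inner_II hq hw α 0 v')
      rw [he, swap hq hw hbd 0 u' v' v]
      have := intervalIntegral.norm_integral_le_of_norm_le_const
        (f := fun β => ∫ α in (0:ℝ)..u', q0 (α + β) * w (α, β)) (a := v') (b := v)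
        (C := Cw * M) (fun β _ => by
          rw [Real.norm_eq_abs]
          exact inner_bound' hq hw hCw β 0 u' fun α _ => hbd (α, β))
      rw [Real.norm_eq_abs] at this
      exact this.trans (le_of_eq (by rw [abs_sub_comm]))
    calc |F (u, v) - F (u', v')|
        ≤ |F (u, v) - F (u', v)| + |F (u', v) - F (u', v')| := by
          have := abs_sub_le (F (u, v)) (F (u', v)) (F (u', v'))
          linarith
      _ ≤ Cw * M * |u - u'| + Cw * M * |v - v'| := add_le_add part1 part2
      _ = Cw * M * (|u - u'| + |v - v'|) := by ring
  have hlip : LipschitzWith (Real.toNNReal (2 * Cw * M)) F := by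
    apply LipschitzWith.of_dist_le_mul
    intro p p'
    rw [Real.coe_toNNReal _ (by positivity), Real.dist_eq]
    calc |F p - F p'| ≤ Cw * M * (|p.1 - p'.1| + |p.2 - p'.2|) := key p p'
      _ ≤ Cw * M * (dist p p' + dist p p') := by
          have h1 : |p.1 - p'.1| ≤ dist p p' := by
            rw [Prod.dist_eq, ← Real.dist_eq]; exact le_max_left _ _
          have h2 : |p.2 - p'.2| ≤ dist p p' := by
            rw [Prod.dist_eq, ← Real.dist_eq]; exact le_max_right _ _
          have := mul_nonneg hCw hM0
          nlinarith [dist_nonneg (x := p) (y := p')]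
      _ = 2 * Cw * M * dist p p' := by ring
  exact hlip.continuous

end Stmt13Aux

open Stmt13Aux BoundedContinuousFunction in
/-- For `q ∈ L¹(−a,a)`, the Volterra-Goursat integral equation
`H(u,v) = (1/2)∫₀ᵘ q + ∫₀ᵘ∫₀ᵛ q(α+β)H(α,β) dβ dα` has a unique continuous solution on
the closed square `Ω₁ = {|u|+|v| ≤ a}`, and `|H(u,v)| ≤ ‖q‖_{L¹}·exp(a‖q‖_{L¹})`. -/
theorem stmt13 (a : ℝ) (ha : 0 < a)
    (q : ℝ → ℝ) (hq : IntegrableOn q (Set.Ioo (-a) a)) :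
    ∃ H : ℝ → ℝ → ℝ,
      ContinuousOn (fun p : ℝ × ℝ => H p.1 p.2) {p : ℝ × ℝ | |p.1| + |p.2| ≤ a} ∧
      (∀ u v : ℝ, |u| + |v| ≤ a →
        H u v = (1/2) * (∫ s in (0:ℝ)..u, q s)
          + ∫ α in (0:ℝ)..u, ∫ β in (0:ℝ)..v, q (α + β) * H α β) ∧
      (∀ u v : ℝ, |u| + |v| ≤ a →
        |H u v| ≤ (∫ x in Set.Ioo (-a) a, |q x|) *
          Real.exp (a * ∫ x in Set.Ioo (-a) a, |q x|)) ∧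
      (∀ H₂ : ℝ → ℝ → ℝ,
        ContinuousOn (fun p : ℝ × ℝ => H₂ p.1 p.2) {p : ℝ × ℝ | |p.1| + |p.2| ≤ a} →
        (∀ u v : ℝ, |u| + |v| ≤ a →
          H₂ u v = (1/2) * (∫ s in (0:ℝ)..u, q s)
            + ∫ α in (0:ℝ)..u, ∫ β in (0:ℝ)..v, q (α + β) * H₂ α β) →
        ∀ u v : ℝ, |u| + |v| ≤ a → H₂ u v = H u v) := by
  classical
  set q0 : ℝ → ℝ := (Set.Ioo (-a) a).indicator q with hq0def
  have hq0 : Integrable q0 := (integrable_indicator_iff measurableSet_Ioo).mpr hq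
  set M : ℝ := ∫ x, |q0 x| with hMdef
  have hM0 : 0 ≤ M := integral_nonneg fun x => abs_nonneg _
  have hMeq : M = ∫ x in Set.Ioo (-a) a, |q x| := by
    rw [hMdef, ← integral_indicator measurableSet_Ioo]
    congr 1; funext x
    by_cases hx : x ∈ Set.Ioo (-a) a
    · simp [hq0def, Set.indicator_of_mem hx]
    · simp [hq0def, Set.indicator_of_notMem hx]
  -- retraction onto the square
  set r : ℝ × ℝ → ℝ × ℝ := fun p => (a / max a (|p.1| + |p.2|)) • p with hrdef
  have hrcont : Continuous r := by
    refine Continuous.smul (continuous_const.div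
      (continuous_const.max ((continuous_fst.abs).add (continuous_snd.abs)))
      (fun p => ?_)) continuous_id
    have : (0:ℝ) < max a (|p.1| + |p.2|) := lt_of_lt_of_le ha (le_max_left _ _)
    exact this.ne'
  have hrmem : ∀ p : ℝ × ℝ, |(r p).1| + |(r p).2| ≤ a := by
    intro p
    have hmax : (0:ℝ) < max a (|p.1| + |p.2|) := lt_of_lt_of_le ha (le_max_left _ _)
    have hc : 0 ≤ a / max a (|p.1| + |p.2|) := by positivity
    have he : |(r p).1| + |(r p).2|
        = (a / max a (|p.1| + |p.2|)) * (|p.1| + |p.2|) := by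
      simp only [hrdef, Prod.smul_fst, Prod.smul_snd, smul_eq_mul, abs_mul,
        abs_of_nonneg hc]
      ring
    rw [he]
    calc (a / max a (|p.1| + |p.2|)) * (|p.1| + |p.2|)
        ≤ (a / max a (|p.1| + |p.2|)) * max a (|p.1| + |p.2|) :=
          mul_le_mul_of_nonneg_left (le_max_right _ _) hc
      _ = a := div_mul_cancel₀ a hmax.ne'
  have hrid : ∀ p : ℝ × ℝ, |p.1| + |p.2| ≤ a → r p = p := by
    intro p hp
    rw [hrdef]
    simp only [max_eq_left hp, div_self ha.ne', one_smul]
  have habs1 : ∀ p : ℝ × ℝ, |p.1| + |p.2| ≤ a → |p.1| ≤ a :=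
    fun p hp => le_trans (le_add_of_nonneg_right (abs_nonneg _)) hp
  -- bounded continuous function facts
  have hbddH : ∀ (H : BoundedContinuousFunction (ℝ × ℝ) ℝ) (p : ℝ × ℝ), |H p| ≤ ‖H‖ :=
    fun H p => by rw [← Real.norm_eq_abs]; exact H.norm_coe_le_norm p
  -- the operator
  have hTF : ∀ H : BoundedContinuousFunction (ℝ × ℝ) ℝ, Continuous (fun p : ℝ × ℝ =>
      (1/2) * (∫ s in (0:ℝ)..(r p).1, q0 s)
      + ∫ α in (0:ℝ)..(r p).1, ∫ β in (0:ℝ)..(r p).2, q0 (α + β) * H (α, β)) := by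
    intro H
    have h1 : Continuous fun u : ℝ => ∫ s in (0:ℝ)..u, q0 s :=
      intervalIntegral.continuous_primitive (fun c d => hq0.intervalIntegrable) 0
    have h2 := contDouble hq0 H.continuous (hbddH H)
    exact ((continuous_const.mul (h1.comp continuous_fst)).add h2).comp hrcont
  have hq0abs : ∀ u : ℝ, |∫ s in (0:ℝ)..u, q0 s| ≤ M := by
    intro u
    calc |∫ s in (0:ℝ)..u, q0 s| = ‖∫ s in (0:ℝ)..u, q0 s‖ := (Real.norm_eq_abs _).symm
      _ ≤ ∫ s in Ι (0:ℝ) u, ‖q0 s‖ := intervalIntegral.norm_integral_le_integral_norm_uIoc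
      _ ≤ ∫ s, ‖q0 s‖ := setIntegral_le_integral hq0.norm (ae_of_all _ fun s => norm_nonneg _)
      _ = M := by rw [hMdef]; simp [Real.norm_eq_abs]
  have hTFbd : ∀ (H : BoundedContinuousFunction (ℝ × ℝ) ℝ) (p : ℝ × ℝ),
      |(1/2) * (∫ s in (0:ℝ)..(r p).1, q0 s)
        + ∫ α in (0:ℝ)..(r p).1, ∫ β in (0:ℝ)..(r p).2, q0 (α + β) * H (α, β)|
        ≤ M / 2 + ‖H‖ * M * a := by
    intro H p
    have b2 : |∫ α in (0:ℝ)..(r p).1, ∫ β in (0:ℝ)..(r p).2, q0 (α + β) * H (α, β)|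
        ≤ ‖H‖ * M * a := by
      have hest := EST hq0 H.continuous (hbddH H) 0 (c := ‖H‖) (norm_nonneg H)
        (r p).1 (r p).2 (fun α _ β _ => by simpa using hbddH H (α, β))
      simp only [pow_one, Nat.cast_zero, zero_add, div_one] at hest
      refine hest.trans ?_
      have := habs1 _ (hrmem p)
      have h1 : ‖H‖ * M * |(r p).1| ≤ ‖H‖ * M * a :=
        mul_le_mul_of_nonneg_left this (by positivity)
      calc ‖H‖ * (∫ x, |q0 x|) * |(r p).1| = ‖H‖ * M * |(r p).1| := by rw [← hMdef]
        _ ≤ ‖H‖ * M * a := h1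
    calc |(1/2) * (∫ s in (0:ℝ)..(r p).1, q0 s)
        + ∫ α in (0:ℝ)..(r p).1, ∫ β in (0:ℝ)..(r p).2, q0 (α + β) * H (α, β)|
        ≤ (1/2) * |∫ s in (0:ℝ)..(r p).1, q0 s|
          + |∫ α in (0:ℝ)..(r p).1, ∫ β in (0:ℝ)..(r p).2, q0 (α + β) * H (α, β)| := by
          have := abs_add_le ((1/2) * (∫ s in (0:ℝ)..(r p).1, q0 s))
            (∫ α in (0:ℝ)..(r p).1, ∫ β in (0:ℝ)..(r p).2, q0 (α + β) * H (α, β))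
          rw [abs_mul] at this
          rw [abs_of_nonneg (by norm_num : (0:ℝ) ≤ 1/2)] at this
          exact this
      _ ≤ M / 2 + ‖H‖ * M * a := by
          have := hq0abs (r p).1
          have h2 := b2
          linarith
  set T : BoundedContinuousFunction (ℝ × ℝ) ℝ → BoundedContinuousFunction (ℝ × ℝ) ℝ :=
    fun H => BoundedContinuousFunction.ofNormedAddCommGroup _ (hTF H) (M / 2 + ‖H‖ * M * a)
      (fun p => by rw [Real.norm_eq_abs]; exact hTFbd H p) with hTdef
  have hTapp : ∀ (H : BoundedContinuousFunction (ℝ × ℝ) ℝ) (p : ℝ × ℝ),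
      T H p = (1/2) * (∫ s in (0:ℝ)..(r p).1, q0 s)
        + ∫ α in (0:ℝ)..(r p).1, ∫ β in (0:ℝ)..(r p).2, q0 (α + β) * H (α, β) :=
    fun H p => rfl
  -- difference formula
  have hTdiff : ∀ (H G : BoundedContinuousFunction (ℝ × ℝ) ℝ) (p : ℝ × ℝ),
      T H p - T G p = ∫ α in (0:ℝ)..(r p).1, ∫ β in (0:ℝ)..(r p).2,
        q0 (α + β) * (H (α, β) - G (α, β)) := by
    intro H G p
    rw [hTapp, hTapp, add_sub_add_left_eq_sub]
    rw [← intervalIntegral.integral_sub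
      (outer_II hq0 H.continuous (hbddH H) 0 (r p).1 0 (r p).2)
      (outer_II hq0 G.continuous (hbddH G) 0 (r p).1 0 (r p).2)]
    refine intervalIntegral.integral_congr fun α _ => ?_
    rw [← intervalIntegral.integral_sub (inner_II hq0 H.continuous α 0 (r p).2)
      (inner_II hq0 G.continuous α 0 (r p).2)]
    refine intervalIntegral.integral_congr fun β _ => ?_
    ring
  -- iterate estimate
  have hIter : ∀ (n : ℕ) (H G : BoundedContinuousFunction (ℝ × ℝ) ℝ) (p : ℝ × ℝ),
      |T^[n] H p - T^[n] G p| ≤ M ^ n * |(r p).1| ^ n / (n.factorial : ℝ) * dist H G := by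
    intro n
    induction n with
    | zero =>
      intro H G p
      simp only [Function.iterate_zero_apply, pow_zero, Nat.factorial_zero, Nat.cast_one,
        mul_one, one_mul, div_one]
      rw [← Real.dist_eq]
      exact BoundedContinuousFunction.dist_coe_le_dist p
    | succ n ih =>
      intro H G p
      rw [Function.iterate_succ_apply', Function.iterate_succ_apply']
      have hwcont : Continuous fun p' : ℝ × ℝ => T^[n] H p' - T^[n] G p' :=
        (T^[n] H).continuous.sub (T^[n] G).continuous
      have hwbd : ∀ p' : ℝ × ℝ, |T^[n] H p' - T^[n] G p'| ≤ ‖T^[n] H - T^[n] G‖ := by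
        intro p'
        have := hbddH (T^[n] H - T^[n] G) p'
        simpa using this
      have hc : (0:ℝ) ≤ M ^ n / (n.factorial : ℝ) * dist H G := by
        have := dist_nonneg (x := H) (y := G)
        positivity
      have hwb : ∀ α ∈ uIcc (0:ℝ) (r p).1, ∀ β ∈ uIcc (0:ℝ) (r p).2,
          |T^[n] H (α, β) - T^[n] G (α, β)|
            ≤ (M ^ n / (n.factorial : ℝ) * dist H G) * |α| ^ n := by
        intro α hα β hβ
        have hab : |α| + |β| ≤ a :=
          le_trans (add_le_add (mem_uIcc_abs hα) (mem_uIcc_abs hβ)) (hrmem p)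
        have := ih H G (α, β)
        rw [hrid (α, β) hab] at this
        calc |T^[n] H (α, β) - T^[n] G (α, β)|
            ≤ M ^ n * |(α, β).1| ^ n / (n.factorial : ℝ) * dist H G := this
          _ = (M ^ n / (n.factorial : ℝ) * dist H G) * |α| ^ n := by ring
      have hest := EST hq0 hwcont hwbd n hc (r p).1 (r p).2 hwb
      rw [hTdiff (T^[n] H) (T^[n] G) p]
      refine hest.trans (le_of_eq ?_)
      rw [← hMdef, Nat.factorial_succ]
      push_cast
      field_simp
      ring
  -- contraction of an iterate
  obtain ⟨n, hn⟩ : ∃ n : ℕ, (M * a) ^ n / (n.factorial : ℝ) < 1 := by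
    have h := FloorSemiring.tendsto_pow_div_factorial_atTop (K := ℝ) (M * a)
    exact (h.eventually (gt_mem_nhds one_pos)).exists
  have hK0 : (0:ℝ) ≤ (M * a) ^ n / (n.factorial : ℝ) := by positivity
  have hcontr : ContractingWith ⟨(M * a) ^ n / (n.factorial : ℝ), hK0⟩ (T^[n]) := by
    constructor
    · exact_mod_cast hn
    · apply LipschitzWith.of_dist_le_mul
      intro H G
      show dist _ _ ≤ (M * a) ^ n / (n.factorial : ℝ) * dist H G
      have hnn : (0:ℝ) ≤ (M * a) ^ n / (n.factorial : ℝ) * dist H G :=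
        mul_nonneg hK0 dist_nonneg
      rw [BoundedContinuousFunction.dist_le hnn]
      intro p
      rw [Real.dist_eq]
      calc |T^[n] H p - T^[n] G p|
          ≤ M ^ n * |(r p).1| ^ n / (n.factorial : ℝ) * dist H G := hIter n H G p
        _ ≤ (M * a) ^ n / (n.factorial : ℝ) * dist H G := by
            have h1 : |(r p).1| ≤ a := habs1 _ (hrmem p)
            have h2 : M ^ n * |(r p).1| ^ n ≤ (M * a) ^ n := by
              rw [mul_pow]
              refine mul_le_mul_of_nonneg_left ?_ (by positivity)
              exact pow_le_pow_left₀ (abs_nonneg _) h1 n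
            have h3 : (0:ℝ) < (n.factorial : ℝ) := by
              exact_mod_cast n.factorial_pos
            have := dist_nonneg (x := H) (y := G)
            exact mul_le_mul_of_nonneg_right ((div_le_div_iff_of_pos_right h3).mpr h2) this
  -- the fixed point
  set W : BoundedContinuousFunction (ℝ × ℝ) ℝ := ContractingWith.fixedPoint (T^[n]) hcontr
    with hWdef
  have hfixed : T W = W := hcontr.isFixedPt_fixedPoint_iterate
  have hWit : ∀ m : ℕ, T^[m] W = W := fun m => Function.IsFixedPt.iterate hfixed m
  -- equation with q0 on the square
  have heq0 : ∀ u v : ℝ, |u| + |v| ≤ a →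
      W (u, v) = (1/2) * (∫ s in (0:ℝ)..u, q0 s)
        + ∫ α in (0:ℝ)..u, ∫ β in (0:ℝ)..v, q0 (α + β) * W (α, β) := by
    intro u v huv
    conv_lhs => rw [← hfixed]
    rw [hTapp W (u, v), hrid (u, v) huv]
  -- congruence between q0 and q
  have habs2 : ∀ u x : ℝ, |u| ≤ a → x ∈ Ι (0:ℝ) u → |x| ≤ a :=
    fun u x hu hx => le_trans (mem_uIcc_abs (uIoc_subset_uIcc hx)) hu
  have hcongr1 : ∀ u : ℝ, |u| ≤ a → (∫ s in (0:ℝ)..u, q0 s) = ∫ s in (0:ℝ)..u, q s := by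
    intro u hu
    apply intervalIntegral.integral_congr_ae
    have hnull : (volume : Measure ℝ) {-a, a} = 0 :=
      Set.Finite.measure_zero (Set.toFinite _) _
    rw [ae_iff]
    refine measure_mono_null (fun x hx => ?_) hnull
    rw [Set.mem_setOf_eq, Classical.not_imp] at hx
    obtain ⟨hx1, hx2⟩ := hx
    have h3 : |x| ≤ a := habs2 u x hu hx1
    have h4 : x ∉ Set.Ioo (-a) a := by
      intro hmem
      exact hx2 (by rw [hq0def, Set.indicator_of_mem hmem])
    rw [Set.mem_Ioo, not_and_or] at h4
    rw [abs_le] at h3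
    simp only [Set.mem_insert_iff, Set.mem_singleton_iff]
    rcases h4 with h | h
    · left; push_neg at h; linarith
    · right; push_neg at h; linarith
  have hcongr2 : ∀ (W' : ℝ → ℝ → ℝ) (u v : ℝ), |u| + |v| ≤ a →
      (∫ α in (0:ℝ)..u, ∫ β in (0:ℝ)..v, q0 (α + β) * W' α β)
        = ∫ α in (0:ℝ)..u, ∫ β in (0:ℝ)..v, q (α + β) * W' α β := by
    intro W' u v huv
    refine intervalIntegral.integral_congr fun α hα => ?_
    apply intervalIntegral.integral_congr_ae
    have hnull : (volume : Measure ℝ) {a - α, -a - α} = 0 :=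
      Set.Finite.measure_zero (Set.toFinite _) _
    rw [ae_iff]
    refine measure_mono_null (fun β hβ => ?_) hnull
    rw [Set.mem_setOf_eq, Classical.not_imp] at hβ
    obtain ⟨hβ1, hβ2⟩ := hβ
    have h1 : |α| ≤ |u| := mem_uIcc_abs hα
    have h2 : |β| ≤ |v| := mem_uIcc_abs (uIoc_subset_uIcc hβ1)
    have h3 : |α + β| ≤ a := le_trans (abs_add_le α β) (by linarith)
    have h4 : α + β ∉ Set.Ioo (-a) a := by
      intro hmem
      exact hβ2 (by rw [hq0def, Set.indicator_of_mem hmem])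
    rw [Set.mem_Ioo, not_and_or] at h4
    rw [abs_le] at h3
    simp only [Set.mem_insert_iff, Set.mem_singleton_iff]
    rcases h4 with h | h
    · right; push_neg at h; linarith
    · left; push_neg at h; linarith
  -- equation with q on the square
  have heqq : ∀ u v : ℝ, |u| + |v| ≤ a →
      W (u, v) = (1/2) * (∫ s in (0:ℝ)..u, q s)
        + ∫ α in (0:ℝ)..u, ∫ β in (0:ℝ)..v, q (α + β) * W (α, β) := by
    intro u v huv
    have h1 : |u| ≤ a := habs1 (u, v) huv
    rw [heq0 u v huv, hcongr1 u h1, hcongr2 (fun α β => W (α, β)) u v huv]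
  -- bound on the solution
  have hT0 : dist (T 0) 0 ≤ M / 2 := by
    rw [dist_zero_right]
    have := BoundedContinuousFunction.norm_ofNormedAddCommGroup_le
      (hTF 0) (C := M / 2 + ‖(0 : BoundedContinuousFunction (ℝ × ℝ) ℝ)‖ * M * a)
      (by simp; positivity) (fun p => by rw [Real.norm_eq_abs]; exact hTFbd 0 p)
    calc ‖T 0‖ ≤ M / 2 + ‖(0 : BoundedContinuousFunction (ℝ × ℝ) ℝ)‖ * M * a := this
      _ = M / 2 := by simp
  have claimB : ∀ (m : ℕ) (p : ℝ × ℝ),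
      |T^[m] 0 p| ≤ M / 2 * ∑ k ∈ Finset.range m, (M * a) ^ k / (k.factorial : ℝ) := by
    intro m
    induction m with
    | zero => intro p; simp
    | succ m ih =>
      intro p
      have hstep : |T^[m + 1] 0 p - T^[m] 0 p| ≤ (M * a) ^ m / (m.factorial : ℝ) * (M / 2) := by
        rw [Function.iterate_succ_apply]
        calc |T^[m] (T 0) p - T^[m] 0 p|
            ≤ M ^ m * |(r p).1| ^ m / (m.factorial : ℝ) * dist (T 0) 0 := hIter m (T 0) 0 p
          _ ≤ (M * a) ^ m / (m.factorial : ℝ) * (M / 2) := by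
              have h1 : |(r p).1| ≤ a := habs1 _ (hrmem p)
              have h2 : M ^ m * |(r p).1| ^ m ≤ (M * a) ^ m := by
                rw [mul_pow]
                exact mul_le_mul_of_nonneg_left (pow_le_pow_left₀ (abs_nonneg _) h1 m)
                  (by positivity)
              have h3 : (0:ℝ) < (m.factorial : ℝ) := by exact_mod_cast m.factorial_pos
              have h4 : M ^ m * |(r p).1| ^ m / (m.factorial : ℝ)
                  ≤ (M * a) ^ m / (m.factorial : ℝ) := (div_le_div_iff_of_pos_right h3).mpr h2
              have h5 : (0:ℝ) ≤ M ^ m * |(r p).1| ^ m / (m.factorial : ℝ) := by positivity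
              exact mul_le_mul h4 hT0 dist_nonneg (by positivity)
      have := ih p
      have htri : |T^[m + 1] 0 p| ≤ |T^[m] 0 p| + |T^[m + 1] 0 p - T^[m] 0 p| := by
        have := abs_add_le (T^[m] 0 p) (T^[m + 1] 0 p - T^[m] 0 p)
        simpa using this
      rw [Finset.sum_range_succ]
      calc |T^[m + 1] 0 p| ≤ |T^[m] 0 p| + |T^[m + 1] 0 p - T^[m] 0 p| := htri
        _ ≤ M / 2 * ∑ k ∈ Finset.range m, (M * a) ^ k / (k.factorial : ℝ)
            + (M * a) ^ m / (m.factorial : ℝ) * (M / 2) := add_le_add this hstep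
        _ = M / 2 * (∑ k ∈ Finset.range m, (M * a) ^ k / (k.factorial : ℝ)
            + (M * a) ^ m / (m.factorial : ℝ)) := by ring
  have claimB' : ∀ (m : ℕ) (p : ℝ × ℝ), |T^[m] 0 p| ≤ M / 2 * Real.exp (M * a) := by
    intro m p
    refine (claimB m p).trans (mul_le_mul_of_nonneg_left ?_ (by positivity))
    have := Real.sum_le_exp_of_nonneg (x := M * a) (by positivity) m
    refine le_trans (le_of_eq ?_) this
    refine Finset.sum_congr rfl fun k _ => ?_
    rw [div_eq_div_iff] <;> first | norm_cast; positivity | ring_nf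
  have hWbound : ∀ p : ℝ × ℝ, |W p| ≤ M / 2 * Real.exp (M * a) := by
    intro p
    have hseq : ∀ m : ℕ, |W p| ≤ (M * a) ^ m / (m.factorial : ℝ) * dist W 0
        + M / 2 * Real.exp (M * a) := by
      intro m
      have h1 : |W p - T^[m] 0 p| ≤ (M * a) ^ m / (m.factorial : ℝ) * dist W 0 := by
        conv_lhs => rw [← hWit m]
        calc |T^[m] W p - T^[m] 0 p|
            ≤ M ^ m * |(r p).1| ^ m / (m.factorial : ℝ) * dist W 0 := hIter m W 0 p
          _ ≤ (M * a) ^ m / (m.factorial : ℝ) * dist W 0 := by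
              have h1 : |(r p).1| ≤ a := habs1 _ (hrmem p)
              have h2 : M ^ m * |(r p).1| ^ m ≤ (M * a) ^ m := by
                rw [mul_pow]
                exact mul_le_mul_of_nonneg_left (pow_le_pow_left₀ (abs_nonneg _) h1 m)
                  (by positivity)
              have h3 : (0:ℝ) < (m.factorial : ℝ) := by exact_mod_cast m.factorial_pos
              exact mul_le_mul_of_nonneg_right ((div_le_div_iff_of_pos_right h3).mpr h2) dist_nonneg
      have h2 := claimB' m p
      have htri : |W p| ≤ |W p - T^[m] 0 p| + |T^[m] 0 p| := by
        have := abs_add_le (W p - T^[m] 0 p) (T^[m] 0 p)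
        simpa using this
      linarith
    have hlim : Tendsto (fun m : ℕ => (M * a) ^ m / (m.factorial : ℝ) * dist W 0
        + M / 2 * Real.exp (M * a)) atTop (nhds (M / 2 * Real.exp (M * a))) := by
      have h := (FloorSemiring.tendsto_pow_div_factorial_atTop (K := ℝ) (M * a)).mul_const
        (dist W 0)
      have h2 := h.add_const (M / 2 * Real.exp (M * a))
      simpa using h2
    exact ge_of_tendsto' hlim hseq
  -- the square is compact
  have hΩc : IsCompact {p : ℝ × ℝ | |p.1| + |p.2| ≤ a} := by
    refine IsCompact.of_isClosed_subset (isCompact_Icc (a := ((-a, -a) : ℝ × ℝ))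
      (b := ((a, a) : ℝ × ℝ))) ?_ ?_
    · exact isClosed_le ((continuous_fst.abs).add (continuous_snd.abs)) continuous_const
    · intro p hp
      simp only [Set.mem_setOf_eq] at hp
      have h1 : |p.1| ≤ a := habs1 p hp
      have h2 : |p.2| ≤ a := le_trans (le_add_of_nonneg_left (abs_nonneg _)) hp
      rw [abs_le] at h1 h2
      rw [Set.mem_Icc, Prod.le_def, Prod.le_def]
      exact ⟨⟨h1.1, h2.1⟩, ⟨h1.2, h2.2⟩⟩
  refine ⟨fun u v => W (u, v), ?_, ?_, ?_, ?_⟩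
  · have : (fun p : ℝ × ℝ => W (p.1, p.2)) = fun p => W p := by
      funext p
      rfl
    rw [this]
    exact W.continuous.continuousOn
  · exact heqq
  · intro u v huv
    rw [← hMeq, mul_comm a]
    refine (hWbound (u, v)).trans ?_
    have := Real.exp_pos (M * a)
    nlinarith
  · -- uniqueness
    intro H₂ hH₂cont hH₂eq
    obtain ⟨C, hC⟩ := hΩc.exists_bound_of_continuousOn
      (f := fun p : ℝ × ℝ => H₂ p.1 p.2 - W p) (hH₂cont.sub W.continuous.continuousOn)
    have hC0 : 0 ≤ C := le_trans (norm_nonneg _) (hC (0, 0) (by simp [ha.le]))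
    set g : ℝ × ℝ → ℝ := fun p => H₂ (r p).1 (r p).2 - W (r p) with hgdef
    have hgcont : Continuous g := by
      have h1 : Continuous fun p : ℝ × ℝ => H₂ (r p).1 (r p).2 :=
        hH₂cont.comp_continuous hrcont hrmem
      exact h1.sub (W.continuous.comp hrcont)
    have hgbd : ∀ p, |g p| ≤ C := by
      intro p
      have := hC (r p) (hrmem p)
      rw [Real.norm_eq_abs] at this
      exact this
    have hgΩ : ∀ p : ℝ × ℝ, |p.1| + |p.2| ≤ a → g p = H₂ p.1 p.2 - W p := by
      intro p hp
      rw [hgdef]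
      simp only [hrid p hp]
    -- comparison function for H₂ on the square, globally bounded continuous
    set g2 : ℝ × ℝ → ℝ := fun p => H₂ (r p).1 (r p).2 with hg2def
    have hg2cont : Continuous g2 := hH₂cont.comp_continuous hrcont hrmem
    obtain ⟨C2, hC2⟩ := hΩc.exists_bound_of_continuousOn
      (f := fun p : ℝ × ℝ => H₂ p.1 p.2) hH₂cont
    have hg2bd : ∀ p, |g2 p| ≤ C2 := by
      intro p
      have := hC2 (r p) (hrmem p)
      rw [Real.norm_eq_abs] at this
      exact this
    have hg2Ω : ∀ p : ℝ × ℝ, |p.1| + |p.2| ≤ a → g2 p = H₂ p.1 p.2 := by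
      intro p hp
      rw [hg2def]
      simp only [hrid p hp]
    -- the difference satisfies the homogeneous equation
    have hgeq : ∀ u v : ℝ, |u| + |v| ≤ a →
        g (u, v) = ∫ α in (0:ℝ)..u, ∫ β in (0:ℝ)..v, q0 (α + β) * g (α, β) := by
      intro u v huv
      have hrect : ∀ α ∈ uIcc (0:ℝ) u, ∀ β ∈ uIcc (0:ℝ) v, |α| + |β| ≤ a :=
        fun α hα β hβ =>
          le_trans (add_le_add (mem_uIcc_abs hα) (mem_uIcc_abs hβ)) huv
      have e1 : H₂ u v = (1/2) * (∫ s in (0:ℝ)..u, q s)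
          + ∫ α in (0:ℝ)..u, ∫ β in (0:ℝ)..v, q0 (α + β) * g2 (α, β) := by
        rw [hH₂eq u v huv]
        congr 1
        rw [← hcongr2 (fun α β => H₂ α β) u v huv]
        refine intervalIntegral.integral_congr fun α hα => ?_
        refine intervalIntegral.integral_congr fun β hβ => ?_
        rw [hg2Ω (α, β) (hrect α hα β hβ)]
      have e2 : W (u, v) = (1/2) * (∫ s in (0:ℝ)..u, q s)
          + ∫ α in (0:ℝ)..u, ∫ β in (0:ℝ)..v, q0 (α + β) * W (α, β) := by
        rw [heqq u v huv]
        congr 1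
        exact (hcongr2 (fun α β => W (α, β)) u v huv).symm
      rw [hgΩ (u, v) huv, e1, e2, add_sub_add_left_eq_sub]
      rw [← intervalIntegral.integral_sub
        (outer_II hq0 hg2cont hg2bd 0 u 0 v)
        (outer_II hq0 W.continuous (hbddH W) 0 u 0 v)]
      refine intervalIntegral.integral_congr fun α hα => ?_
      rw [← intervalIntegral.integral_sub (inner_II hq0 hg2cont α 0 v)
        (inner_II hq0 W.continuous α 0 v)]
      refine intervalIntegral.integral_congr fun β hβ => ?_
      have hab := hrect α hα β hβ
      rw [hgΩ (α, β) hab, hg2Ω (α, β) hab]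
      ring
    -- iterate the homogeneous equation
    have hind : ∀ n : ℕ, ∀ u v : ℝ, |u| + |v| ≤ a →
        |g (u, v)| ≤ C * (M ^ n * |u| ^ n / (n.factorial : ℝ)) := by
      intro n
      induction n with
      | zero =>
        intro u v huv
        simpa using hgbd (u, v)
      | succ n ih =>
        intro u v huv
        rw [hgeq u v huv]
        have hc : (0:ℝ) ≤ C * M ^ n / (n.factorial : ℝ) := by positivity
        have hwb : ∀ α ∈ uIcc (0:ℝ) u, ∀ β ∈ uIcc (0:ℝ) v,
            |g (α, β)| ≤ (C * M ^ n / (n.factorial : ℝ)) * |α| ^ n := by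
          intro α hα β hβ
          have hab : |α| + |β| ≤ a :=
            le_trans (add_le_add (mem_uIcc_abs hα) (mem_uIcc_abs hβ)) huv
          refine (ih α β hab).trans (le_of_eq ?_)
          ring
        have hest := EST hq0 hgcont hgbd n hc u v hwb
        refine hest.trans (le_of_eq ?_)
        rw [← hMdef, Nat.factorial_succ]
        push_cast
        field_simp
        ring
    intro u v huv
    have hlim0 : ∀ m : ℕ, |g (u, v)| ≤ C * ((M * a) ^ m / (m.factorial : ℝ)) := by
      intro m
      refine (hind m u v huv).trans ?_
      have h1 : |u| ≤ a := habs1 (u, v) huv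
      have h2 : M ^ m * |u| ^ m ≤ (M * a) ^ m := by
        rw [mul_pow]
        exact mul_le_mul_of_nonneg_left (pow_le_pow_left₀ (abs_nonneg _) h1 m) (by positivity)
      have h3 : (0:ℝ) < (m.factorial : ℝ) := by exact_mod_cast m.factorial_pos
      exact mul_le_mul_of_nonneg_left ((div_le_div_iff_of_pos_right h3).mpr h2) hC0
    have hlim : Tendsto (fun m : ℕ => C * ((M * a) ^ m / (m.factorial : ℝ))) atTop
        (nhds 0) := by
      have := (FloorSemiring.tendsto_pow_div_factorial_atTop (K := ℝ) (M * a)).const_mul C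
      simpa using this
    have hg0 : |g (u, v)| ≤ 0 := ge_of_tendsto' hlim hlim0
    have hg0' : g (u, v) = 0 := abs_eq_zero.mp (le_antisymm hg0 (abs_nonneg _))
    have := hgΩ (u, v) huv
    rw [hg0'] at this
    linarith [this]
end

section
/- In the successive-approximation scheme for the Goursat integral equation, the iterates H₀(u,v) = (1/2)∫₀ᵘ q(s) ds and Hₙ(u,v) = ∫₀ᵘ∫₀ᵛ q(α+β)Hₙ₋₁(α,β) dβ dα satisfy the bound |Hₙ(u,v)| ≤ ‖q‖_{L¹} · (a‖q‖_{L¹})ⁿ / n! for all n ≥ 0 and (u,v) ∈ Ω₁, so that the series ∑ₙ Hₙ converges uniformly on Ω₁. -/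
open MeasureTheory Set Filter
open scoped Interval

/-- The successive approximations `H₀(u,v) = (1/2)∫₀ᵘ q`,
`Hₙ(u,v) = ∫₀ᵘ∫₀ᵛ q(α+β)Hₙ₋₁(α,β) dβ dα` satisfy
`|Hₙ(u,v)| ≤ ‖q‖_{L¹}(a‖q‖_{L¹})ⁿ/n!` on the square `Ω₁ = {|u|+|v| ≤ a}`,
and hence the series `∑ₙ Hₙ` converges uniformly on `Ω₁`. -/
theorem stmt14 (a : ℝ) (ha : 0 < a)
    (q : ℝ → ℝ) (hq : IntegrableOn q (Set.Ioo (-a) a))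
    (H : ℕ → ℝ → ℝ → ℝ)
    (h0 : ∀ u v : ℝ, H 0 u v = (1/2) * ∫ s in (0:ℝ)..u, q s)
    (hrec : ∀ n : ℕ, ∀ u v : ℝ,
      H (n + 1) u v = ∫ α in (0:ℝ)..u, ∫ β in (0:ℝ)..v, q (α + β) * H n α β) :
    (∀ n : ℕ, ∀ u v : ℝ, |u| + |v| ≤ a →
      |H n u v| ≤ (∫ x in Set.Ioo (-a) a, |q x|) *
        (a * ∫ x in Set.Ioo (-a) a, |q x|) ^ n / n.factorial) ∧
    TendstoUniformlyOn
      (fun N : ℕ => fun p : ℝ × ℝ => ∑ n ∈ Finset.range N, H n p.1 p.2)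
      (fun p : ℝ × ℝ => ∑' n : ℕ, H n p.1 p.2) atTop
      {p : ℝ × ℝ | |p.1| + |p.2| ≤ a} := by
  set Q : ℝ := ∫ x in Set.Ioo (-a) a, |q x| with hQdef
  have hQ0 : 0 ≤ Q :=
    setIntegral_nonneg measurableSet_Ioo fun x _ => abs_nonneg _
  have hqabs : IntegrableOn (fun x => |q x|) (Set.Ioo (-a) a) := hq.abs
  -- |x| ≤ max |s| |t| on uIcc s t
  have habs2 : ∀ s t x : ℝ, x ∈ Set.uIcc s t → |x| ≤ max |s| |t| := by
    intro s t x hx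
    rcases le_total s t with h | h
    · rw [Set.uIcc_of_le h] at hx
      have h1 := neg_abs_le s; have h2 := le_abs_self t
      have h3 := le_max_left |s| |t|; have h4 := le_max_right |s| |t|
      exact abs_le.2 ⟨by linarith [hx.1], by linarith [hx.2]⟩
    · rw [Set.uIcc_of_ge h] at hx
      have h1 := neg_abs_le t; have h2 := le_abs_self s
      have h3 := le_max_left |s| |t|; have h4 := le_max_right |s| |t|
      exact abs_le.2 ⟨by linarith [hx.1], by linarith [hx.2]⟩
  -- ae inclusion of subintervals into Ioo (-a) a
  have hsub : ∀ s t : ℝ, |s| ≤ a → |t| ≤ a → Ι s t ≤ᵐ[volume] Set.Ioo (-a) a := by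
    intro s t hs ht
    rw [ae_le_set]
    refine measure_mono_null (t := ({-a, a} : Set ℝ)) ?_
      (((Set.countable_singleton a).insert (-a)).measure_zero _)
    rintro x ⟨hx1, hx2⟩
    have hxa : |x| ≤ a :=
      le_trans (habs2 s t x (Set.Ioc_subset_Icc_self hx1)) (max_le hs ht)
    have h1 := abs_le.1 hxa
    simp only [Set.mem_Ioo, not_and, not_lt] at hx2
    simp only [Set.mem_insert_iff, Set.mem_singleton_iff]
    rcases eq_or_lt_of_le h1.1 with h | h
    · exact Or.inl h.symm
    · exact Or.inr (le_antisymm h1.2 (hx2 h))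
  -- L¹ bound on subintervals
  have keyA : ∀ s t : ℝ, |s| ≤ a → |t| ≤ a → (∫ x in Ι s t, |q x|) ≤ Q := by
    intro s t hs ht
    exact setIntegral_mono_set hqabs
      (Filter.Eventually.of_forall fun x => abs_nonneg _) (hsub s t hs ht)
  -- set integral over uIoc of a nonneg function equals abs of interval integral
  have hIeq : ∀ (f : ℝ → ℝ) (s t : ℝ), (∀ x, 0 ≤ f x) →
      (∫ x in Ι s t, f x) = |∫ x in s..t, f x| := by
    intro f s t hf
    rcases le_total s t with h | h
    · rw [Set.uIoc_of_le h, intervalIntegral.integral_of_le h,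
        abs_of_nonneg (setIntegral_nonneg measurableSet_Ioc fun x _ => hf x)]
    · rw [Set.uIoc_of_ge h, intervalIntegral.integral_symm, abs_neg,
        intervalIntegral.integral_of_le h,
        abs_of_nonneg (setIntegral_nonneg measurableSet_Ioc fun x _ => hf x)]
  -- ∫ |α|^n over Ι 0 u
  have hpow : ∀ (n : ℕ) (u : ℝ),
      (∫ x in Ι (0:ℝ) u, |x| ^ n) = |u| ^ (n + 1) / (n + 1) := by
    intro n u
    rcases le_total 0 u with h | h
    · rw [Set.uIoc_of_le h, ← intervalIntegral.integral_of_le h]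
      rw [intervalIntegral.integral_congr (g := fun x => x ^ n)
        (fun x hx => by
          rw [Set.uIcc_of_le h] at hx
          simp [abs_of_nonneg hx.1]),
        integral_pow, abs_of_nonneg h]
      push_cast; ring
    · rw [Set.uIoc_of_ge h, ← intervalIntegral.integral_of_le h]
      rw [intervalIntegral.integral_congr (g := fun x => (-x) ^ n)
        (fun x hx => by
          rw [Set.uIcc_of_le h] at hx
          rw [abs_of_nonpos hx.2]),
        intervalIntegral.integral_comp_neg (fun x => x ^ n),
        integral_pow, abs_of_nonpos h]
      push_cast; simp
    -- main inductive bound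
  have hB : ∀ n : ℕ, ∀ u v : ℝ, |u| + |v| ≤ a →
      |H n u v| ≤ Q * (Q * |u|) ^ n / n.factorial := by
    intro n
    induction n with
    | zero =>
      intro u v huv
      have hu : |u| ≤ a := by have := abs_nonneg v; linarith
      rw [h0]
      have h1 : |∫ s in (0:ℝ)..u, q s| ≤ ∫ x in Ι (0:ℝ) u, |q x| := by
        simpa [Real.norm_eq_abs] using
          intervalIntegral.norm_integral_le_integral_norm_uIoc
            (a := (0:ℝ)) (b := u) (f := q) (μ := volume)
      have h2 : (∫ x in Ι (0:ℝ) u, |q x|) ≤ Q :=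
        keyA 0 u (by simpa using ha.le) hu
      have h3 : (0:ℝ) ≤ |∫ s in (0:ℝ)..u, q s| := abs_nonneg _
      rw [abs_mul]
      simp only [pow_zero, Nat.factorial_zero, Nat.cast_one, mul_one, div_one]
      rw [abs_of_nonneg (by norm_num : (0:ℝ) ≤ 1/2)]
      linarith
    | succ n ih =>
      intro u v huv
      have hu : |u| ≤ a := by have := abs_nonneg v; linarith
      have hv : |v| ≤ a := by have := abs_nonneg u; linarith
      rw [hrec]
      -- inner bound
      have hinner : ∀ α ∈ Ι (0:ℝ) u,
          |∫ β in (0:ℝ)..v, q (α + β) * H n α β| ≤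
            Q * (Q * |α|) ^ n / n.factorial * Q := by
        intro α hα
        have hαu : |α| ≤ |u| := by
          have := habs2 0 u α (Set.Ioc_subset_Icc_self hα)
          simpa using this
        have hαa : |α| ≤ a := le_trans hαu hu
        have hαv : |α + v| ≤ a := le_trans (abs_add_le α v) (by linarith)
        have hM0 : (0:ℝ) ≤ Q * (Q * |α|) ^ n / n.factorial := by positivity
        -- integrability of translated |q|
        have hqi : IntervalIntegrable q volume α (α + v) := by
          rw [intervalIntegrable_iff]
          exact hq.mono_set_ae (hsub α (α + v) hαa hαv)
        have hqt : IntervalIntegrable (fun β => q (α + β)) volume 0 v := by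
          have := hqi.comp_add_left α
          simpa using this
        have hqtabs : IntegrableOn (fun β => |q (α + β)|) (Ι (0:ℝ) v) volume :=
          intervalIntegrable_iff.mp hqt.abs
        calc |∫ β in (0:ℝ)..v, q (α + β) * H n α β|
            ≤ ∫ β in Ι (0:ℝ) v, |q (α + β)| * |H n α β| := by
              simpa [Real.norm_eq_abs, abs_mul] using
                intervalIntegral.norm_integral_le_integral_norm_uIoc
                  (a := (0:ℝ)) (b := v)
                  (f := fun β => q (α + β) * H n α β) (μ := volume)
          _ ≤ ∫ β in Ι (0:ℝ) v,
                |q (α + β)| * (Q * (Q * |α|) ^ n / n.factorial) := by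
              refine integral_mono_of_nonneg
                (Filter.Eventually.of_forall fun β =>
                  mul_nonneg (abs_nonneg _) (abs_nonneg _))
                (hqtabs.mul_const _) ?_
              filter_upwards [ae_restrict_mem measurableSet_uIoc] with β hβ
              refine mul_le_mul_of_nonneg_left ?_ (abs_nonneg _)
              have hβv : |β| ≤ |v| := by
                have := habs2 0 v β (Set.Ioc_subset_Icc_self hβ)
                simpa using this
              exact ih α β (by linarith)
          _ = (∫ β in Ι (0:ℝ) v, |q (α + β)|) *
                (Q * (Q * |α|) ^ n / n.factorial) := by
              rw [integral_mul_const]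
          _ ≤ Q * (Q * (Q * |α|) ^ n / n.factorial) := by
              have htr : (∫ β in Ι (0:ℝ) v, |q (α + β)|) =
                  ∫ x in Ι α (α + v), |q x| := by
                rw [hIeq (fun β => |q (α + β)|) 0 v (fun _ => abs_nonneg _),
                  hIeq (fun x => |q x|) α (α + v) (fun _ => abs_nonneg _)]
                congr 1
                simpa using
                  intervalIntegral.integral_comp_add_left
                    (a := (0:ℝ)) (b := v) (f := fun x => |q x|) α
              rw [htr]
              exact (mul_le_mul_of_nonneg_right
                (keyA α (α + v) hαa hαv) hM0).trans_eq rfl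
          _ = Q * (Q * |α|) ^ n / n.factorial * Q := by ring
      -- outer estimate
      have hcont : Continuous (fun α : ℝ => Q * (Q * |α|) ^ n / n.factorial * Q) := by
        fun_prop
      have hdomi : IntegrableOn
          (fun α : ℝ => Q * (Q * |α|) ^ n / n.factorial * Q) (Ι (0:ℝ) u) volume :=
        intervalIntegrable_iff.mp (hcont.intervalIntegrable 0 u)
      have houter : |∫ α in (0:ℝ)..u, ∫ β in (0:ℝ)..v, q (α + β) * H n α β| ≤
          ∫ α in Ι (0:ℝ) u, Q * (Q * |α|) ^ n / n.factorial * Q := by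
        calc |∫ α in (0:ℝ)..u, ∫ β in (0:ℝ)..v, q (α + β) * H n α β|
            ≤ ∫ α in Ι (0:ℝ) u, |∫ β in (0:ℝ)..v, q (α + β) * H n α β| := by
              simpa [Real.norm_eq_abs] using
                intervalIntegral.norm_integral_le_integral_norm_uIoc
                  (a := (0:ℝ)) (b := u)
                  (f := fun α => ∫ β in (0:ℝ)..v, q (α + β) * H n α β)
                  (μ := volume)
          _ ≤ ∫ α in Ι (0:ℝ) u, Q * (Q * |α|) ^ n / n.factorial * Q := by
              refine integral_mono_of_nonneg
                (Filter.Eventually.of_forall fun α => abs_nonneg _) hdomi ?_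
              filter_upwards [ae_restrict_mem measurableSet_uIoc] with α hα
              exact hinner α hα
      -- compute the dominating integral
      have hval : (∫ α in Ι (0:ℝ) u, Q * (Q * |α|) ^ n / n.factorial * Q) =
          Q * (Q * |u|) ^ (n + 1) / (n + 1).factorial := by
        have heq : (fun α : ℝ => Q * (Q * |α|) ^ n / n.factorial * Q) =
            fun α : ℝ => (Q ^ (n + 2) / n.factorial) * |α| ^ n := by
          funext α; rw [mul_pow]; ring
        rw [heq, integral_const_mul, hpow n u]
        have hfac : ((n + 1).factorial : ℝ) = (n + 1) * n.factorial := by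
          rw [Nat.factorial_succ]; push_cast; ring
        have hn0 : (n.factorial : ℝ) ≠ 0 := by positivity
        have hn1 : ((n : ℝ) + 1) ≠ 0 := by positivity
        rw [hfac, mul_pow]
        field_simp
        ring
      rw [hval] at houter
      exact houter
  have hmain : ∀ n : ℕ, ∀ u v : ℝ, |u| + |v| ≤ a →
      |H n u v| ≤ Q * (a * Q) ^ n / n.factorial := by
    intro n u v huv
    have hu : |u| ≤ a := by have := abs_nonneg v; linarith
    refine le_trans (hB n u v huv) ?_
    have h1 : Q * |u| ≤ a * Q := by
      rw [mul_comm a Q]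
      exact mul_le_mul_of_nonneg_left hu hQ0
    gcongr
  refine ⟨hmain, ?_⟩
  have hsum : Summable (fun n : ℕ => Q * (a * Q) ^ n / n.factorial) := by
    simpa [mul_div_assoc] using (Real.summable_pow_div_factorial (a * Q)).mul_left Q
  exact tendstoUniformlyOn_tsum_nat hsum fun n p hp => by
    simpa [Real.norm_eq_abs] using hmain n p.1 p.2 hp
end

section
/- Let q, q̃ ∈ L¹(−a,a) and let H, H̃ be the respective unique continuous solutions of H(u,v) = (1/2)∫₀ᵘ q + ∫₀ᵘ∫₀ᵛ q(α+β)H(α,β) dβ dα on the square Ω₁. Then sup_{Ω₁} |H̃ − H| ≤ C‖q̃ − q‖_{L¹} · exp(a‖q̃‖_{L¹}), where C = 1/2 + a·sup_{Ω₁}|H|. In particular, the map q ↦ H is continuous from L¹(−a,a) to C(Ω₁). -/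
open MeasureTheory Set
open scoped Interval

lemma aux_abs_le_of_mem_uIoc {c x : ℝ} (hx : x ∈ Ι (0:ℝ) c) : |x| ≤ |c| := by
  rcases Set.mem_uIoc.1 hx with h | h
  · rw [abs_of_pos h.1]; exact h.2.trans (le_abs_self c)
  · rw [abs_of_nonpos h.2]; exact (neg_le_neg h.1.le).trans (neg_le_abs c)

lemma aux_iter (u v : ℝ) (F : ℝ → ℝ → ℝ)
    (hF : Integrable (fun p : ℝ × ℝ => F p.1 p.2)
      ((volume.restrict (Ι (0:ℝ) u)).prod (volume.restrict (Ι (0:ℝ) v)))) :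
    ∫ α in (0:ℝ)..u, ∫ β in (0:ℝ)..v, F α β =
      ((if (0:ℝ) ≤ u then (1:ℝ) else -1) * (if (0:ℝ) ≤ v then (1:ℝ) else -1)) *
        ∫ p, F p.1 p.2 ∂((volume.restrict (Ι (0:ℝ) u)).prod (volume.restrict (Ι (0:ℝ) v))) := by
  have key : (∫ α in Ι (0:ℝ) u, ∫ β in Ι (0:ℝ) v, F α β) =
      ∫ p, F p.1 p.2 ∂((volume.restrict (Ι (0:ℝ) u)).prod (volume.restrict (Ι (0:ℝ) v))) :=
    MeasureTheory.integral_integral hF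
  have hinner : ∀ α : ℝ, (∫ β in (0:ℝ)..v, F α β) =
      (if (0:ℝ) ≤ v then (1:ℝ) else -1) • ∫ β in Ι (0:ℝ) v, F α β := fun α =>
    intervalIntegral.intervalIntegral_eq_integral_uIoc _ _ _ _
  calc ∫ α in (0:ℝ)..u, ∫ β in (0:ℝ)..v, F α β
      = ∫ α in (0:ℝ)..u, (if (0:ℝ) ≤ v then (1:ℝ) else -1) • ∫ β in Ι (0:ℝ) v, F α β := by
        simp_rw [hinner]
    _ = (if (0:ℝ) ≤ v then (1:ℝ) else -1) • ∫ α in (0:ℝ)..u, ∫ β in Ι (0:ℝ) v, F α β := by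
        rw [intervalIntegral.integral_smul]
    _ = (if (0:ℝ) ≤ v then (1:ℝ) else -1) • ((if (0:ℝ) ≤ u then (1:ℝ) else -1) •
          ∫ α in Ι (0:ℝ) u, ∫ β in Ι (0:ℝ) v, F α β) := by
        rw [intervalIntegral.intervalIntegral_eq_integral_uIoc]
    _ = _ := by rw [key]; split_ifs <;> simp

lemma aux_prod_integrable (a : ℝ) (u v : ℝ) (huv : |u| + |v| ≤ a)
    (f : ℝ → ℝ) (hf : Integrable f (volume : Measure ℝ))
    (G : ℝ → ℝ → ℝ)
    (hG : ContinuousOn (fun p : ℝ × ℝ => G p.1 p.2) {p : ℝ × ℝ | |p.1| + |p.2| ≤ a})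
    (MG : ℝ) (hMG : ∀ x y : ℝ, |x| + |y| ≤ a → |G x y| ≤ MG) :
    Integrable (fun p : ℝ × ℝ => f (p.1 + p.2) * G p.1 p.2)
      ((volume.restrict (Ι (0:ℝ) u)).prod (volume.restrict (Ι (0:ℝ) v))) := by
  have hrect : (Ι (0:ℝ) u ×ˢ Ι (0:ℝ) v : Set (ℝ × ℝ)) ⊆ {p : ℝ × ℝ | |p.1| + |p.2| ≤ a} := by
    rintro ⟨x, y⟩ ⟨hx, hy⟩
    exact le_trans (add_le_add (aux_abs_le_of_mem_uIoc hx) (aux_abs_le_of_mem_uIoc hy)) huv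
  have hmeas_rect : MeasurableSet (Ι (0:ℝ) u ×ˢ Ι (0:ℝ) v : Set (ℝ × ℝ)) :=
    measurableSet_uIoc.prod measurableSet_uIoc
  rw [show ((volume.restrict (Ι (0:ℝ) u)).prod (volume.restrict (Ι (0:ℝ) v)))
      = ((volume : Measure ℝ).prod volume).restrict (Ι (0:ℝ) u ×ˢ Ι (0:ℝ) v) from
    Measure.prod_restrict _ _]
  -- a.e. strong measurability of the sum-composition
  have haesm : AEStronglyMeasurable (fun p : ℝ × ℝ => f (p.1 + p.2))
      ((volume : Measure ℝ).prod volume) := by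
    have h2 : AEStronglyMeasurable (fun z : ℝ × ℝ => f z.2)
        ((volume : Measure ℝ).prod volume) := hf.aestronglyMeasurable.comp_snd
    exact h2.comp_quasiMeasurePreserving
      (measurePreserving_prod_add (volume : Measure ℝ) volume).quasiMeasurePreserving
  -- integrability of the sum-composition on the rectangle
  have hint : Integrable (fun p : ℝ × ℝ => f (p.1 + p.2))
      (((volume : Measure ℝ).prod volume).restrict (Ι (0:ℝ) u ×ˢ Ι (0:ℝ) v)) := by
    refine ⟨haesm.restrict, ?_⟩
    rw [HasFiniteIntegral, ← Measure.prod_restrict,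
      MeasureTheory.lintegral_prod _ (by
        rw [Measure.prod_restrict]
        exact (haesm.restrict.enorm))]
    have hinner : ∀ α : ℝ, (∫⁻ β in Ι (0:ℝ) v, ‖f (α + β)‖₊ ∂volume) ≤ ∫⁻ x, ‖f x‖₊ ∂volume := by
      intro α
      refine le_trans (setLIntegral_le_lintegral _ _) ?_
      exact le_of_eq (lintegral_add_left_eq_self (fun x => (‖f x‖₊ : ENNReal)) α)
    calc (∫⁻ α in Ι (0:ℝ) u, ∫⁻ β in Ι (0:ℝ) v, ‖f (α + β)‖₊ ∂volume ∂volume)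
        ≤ ∫⁻ _ in Ι (0:ℝ) u, (∫⁻ x, ‖f x‖₊ ∂volume) ∂volume :=
          lintegral_mono_ae (Filter.Eventually.of_forall hinner)
      _ = (∫⁻ x, ‖f x‖₊ ∂volume) * volume (Ι (0:ℝ) u) := by
          rw [setLIntegral_const]
      _ < ⊤ := ENNReal.mul_lt_top hf.2 (by rw [Set.uIoc]; exact measure_Ioc_lt_top)
  -- multiply by the bounded factor
  have hGm : AEStronglyMeasurable (fun p : ℝ × ℝ => G p.1 p.2)
      (((volume : Measure ℝ).prod volume).restrict (Ι (0:ℝ) u ×ˢ Ι (0:ℝ) v)) := by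
    have hcl : MeasurableSet {p : ℝ × ℝ | |p.1| + |p.2| ≤ a} :=
      (isClosed_le (by fun_prop) continuous_const).measurableSet
    exact (hG.aestronglyMeasurable hcl).mono_measure
      (Measure.restrict_mono hrect le_rfl)
  have hbd : ∀ᵐ p ∂(((volume : Measure ℝ).prod volume).restrict (Ι (0:ℝ) u ×ˢ Ι (0:ℝ) v)),
      ‖G p.1 p.2‖ ≤ MG := by
    refine ae_restrict_of_forall_mem hmeas_rect fun p hp => ?_
    rw [Real.norm_eq_abs]
    exact hMG p.1 p.2 (hrect hp)
  exact (hint.bdd_mul hGm hbd).congr (Filter.Eventually.of_forall fun p => mul_comm _ _)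

lemma aux_int_step (Q t c1 c2 : ℝ) (n : ℕ) :
    (∫ s in (0:ℝ)..t, Q * (c1 * (∑ k ∈ Finset.range n, (Q*s)^k / (Nat.factorial k))
        + c2 * ((Q*s)^n / (Nat.factorial n))))
      = c1 * (∑ k ∈ Finset.range n, (Q*t)^(k+1) / (Nat.factorial (k+1)))
        + c2 * ((Q*t)^(n+1) / (Nat.factorial (n+1))) := by
  have hcont : ∀ (c : ℝ) (k : ℕ), IntervalIntegrable (fun s : ℝ => c * (Q*s)^k) volume 0 t :=
    fun c k => (continuous_const.mul ((continuous_const.mul continuous_id).pow k)).intervalIntegrable 0 t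
  have hpol : ∀ (c : ℝ) (k : ℕ), (∫ s in (0:ℝ)..t, c * (Q*s)^k) = c * (Q^k * (t^(k+1)/(k+1))) := by
    intro c k
    simp_rw [mul_pow]
    rw [intervalIntegral.integral_const_mul, intervalIntegral.integral_const_mul, integral_pow]
    have : ((0:ℝ)) ^ (k+1) = 0 := zero_pow (Nat.succ_ne_zero k)
    rw [this]
    ring
  have h1 : (fun s : ℝ => Q * (c1 * (∑ k ∈ Finset.range n, (Q*s)^k / (Nat.factorial k))
        + c2 * ((Q*s)^n / (Nat.factorial n))))
      = fun s : ℝ => (∑ k ∈ Finset.range n, (Q * c1 / (Nat.factorial k)) * (Q*s)^k)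
        + (Q * c2 / (Nat.factorial n)) * (Q*s)^n := by
    funext s
    rw [mul_add, Finset.mul_sum, Finset.mul_sum]
    congr 1
    · exact Finset.sum_congr rfl fun k _ => by ring
    · ring
  have hsumcont : IntervalIntegrable
      (fun s : ℝ => ∑ k ∈ Finset.range n, (Q * c1 / (Nat.factorial k)) * (Q*s)^k) volume 0 t :=
    (continuous_finset_sum _ fun k _ =>
      continuous_const.mul ((continuous_const.mul continuous_id).pow k)).intervalIntegrable 0 t
  rw [h1, intervalIntegral.integral_add hsumcont (hcont _ n),
    intervalIntegral.integral_finset_sum fun k _ => hcont _ k]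
  simp_rw [hpol]
  have hterm : ∀ (c : ℝ) (k : ℕ), (Q * c / (Nat.factorial k)) * (Q^k * (t^(k+1)/(k+1)))
      = c * ((Q*t)^(k+1) / (Nat.factorial (k+1))) := by
    intro c k
    have hk : ((Nat.factorial k : ℝ)) ≠ 0 := Nat.cast_ne_zero.2 (Nat.factorial_ne_zero k)
    have hk1 : ((k:ℝ)+1) ≠ 0 := by positivity
    rw [Nat.factorial_succ, mul_pow]
    push_cast
    field_simp
    ring
  rw [Finset.mul_sum]
  congr 1
  · exact Finset.sum_congr rfl fun k _ => hterm c1 k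
  · exact hterm c2 n

/-- Continuous dependence of the Goursat kernel on the potential: if `H`, `H̃` are the
continuous solutions of the integral equation for `q`, `q̃` on the square
`Ω₁ = {|u|+|v| ≤ a}`, and `MH` bounds `|H|` on `Ω₁`, then
`|H̃ − H| ≤ (1/2 + a·MH)·‖q̃ − q‖_{L¹}·exp(a‖q̃‖_{L¹})` on `Ω₁`.
In particular, `q ↦ H` is continuous from `L¹(−a,a)` to `C(Ω₁)`. -/
theorem stmt15 (a : ℝ) (ha : 0 < a)
    (q qt : ℝ → ℝ)
    (hq : IntegrableOn q (Set.Ioo (-a) a)) (hqt : IntegrableOn qt (Set.Ioo (-a) a))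
    (H Ht : ℝ → ℝ → ℝ)
    (hHcont : ContinuousOn (fun p : ℝ × ℝ => H p.1 p.2) {p : ℝ × ℝ | |p.1| + |p.2| ≤ a})
    (hHtcont : ContinuousOn (fun p : ℝ × ℝ => Ht p.1 p.2) {p : ℝ × ℝ | |p.1| + |p.2| ≤ a})
    (hH : ∀ u v : ℝ, |u| + |v| ≤ a →
      H u v = (1/2) * (∫ s in (0:ℝ)..u, q s)
        + ∫ α in (0:ℝ)..u, ∫ β in (0:ℝ)..v, q (α + β) * H α β)
    (hHt : ∀ u v : ℝ, |u| + |v| ≤ a →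
      Ht u v = (1/2) * (∫ s in (0:ℝ)..u, qt s)
        + ∫ α in (0:ℝ)..u, ∫ β in (0:ℝ)..v, qt (α + β) * Ht α β)
    (MH : ℝ) (hMH : ∀ u v : ℝ, |u| + |v| ≤ a → |H u v| ≤ MH) :
    ∀ u v : ℝ, |u| + |v| ≤ a →
      |Ht u v - H u v| ≤ (1/2 + a * MH) * (∫ x in Set.Ioo (-a) a, |qt x - q x|) *
        Real.exp (a * ∫ x in Set.Ioo (-a) a, |qt x|) := by
  -- compactness of the square
  have hΩclosed : IsClosed {p : ℝ × ℝ | |p.1| + |p.2| ≤ a} :=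
    isClosed_le (by fun_prop) continuous_const
  have hΩcompact : IsCompact {p : ℝ × ℝ | |p.1| + |p.2| ≤ a} := by
    refine Metric.isCompact_of_isClosed_isBounded hΩclosed ?_
    refine (Metric.isBounded_closedBall (x := ((0,0) : ℝ × ℝ)) (r := a)).subset ?_
    rintro ⟨x, y⟩ h
    rw [Metric.mem_closedBall, Prod.dist_eq]
    simp only [dist_zero_right, Real.norm_eq_abs]
    exact max_le ((le_add_of_nonneg_right (abs_nonneg _)).trans h)
      ((le_add_of_nonneg_left (abs_nonneg _)).trans h)
  have hΩne : ({p : ℝ × ℝ | |p.1| + |p.2| ≤ a}).Nonempty := ⟨(0,0), by simp [ha.le]⟩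
  have hMcont : ContinuousOn (fun p : ℝ × ℝ => Ht p.1 p.2 - H p.1 p.2)
      {p : ℝ × ℝ | |p.1| + |p.2| ≤ a} := hHtcont.sub hHcont
  -- sup of |Ht - H| on the square
  obtain ⟨pS, hpSmem, hpS⟩ := hΩcompact.exists_isMaxOn hΩne hMcont.abs
  set S : ℝ := |Ht pS.1 pS.2 - H pS.1 pS.2| with hSdef
  have hS : ∀ x y : ℝ, |x| + |y| ≤ a → |Ht x y - H x y| ≤ S := fun x y h =>
    isMaxOn_iff.1 hpS (x, y) h
  have hS0 : 0 ≤ S := abs_nonneg _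
  -- sup of |Ht| on the square
  obtain ⟨pT, hpTmem, hpT⟩ := hΩcompact.exists_isMaxOn hΩne hHtcont.abs
  set MHt : ℝ := |Ht pT.1 pT.2| with hMHtdef
  have hMHt : ∀ x y : ℝ, |x| + |y| ≤ a → |Ht x y| ≤ MHt := fun x y h =>
    isMaxOn_iff.1 hpT (x, y) h
  have hMH0 : 0 ≤ MH := le_trans (abs_nonneg _) (hMH 0 0 (by simp [ha.le]))
  have hC0 : (0:ℝ) ≤ 1/2 + a * MH := by positivity
  -- truncated potentials
  set q0 : ℝ → ℝ := (Set.Ioo (-a) a).indicator q with hq0def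
  set qt0 : ℝ → ℝ := (Set.Ioo (-a) a).indicator qt with hqt0def
  have hq0 : Integrable q0 volume := hq.integrable_indicator measurableSet_Ioo
  have hqt0 : Integrable qt0 volume := hqt.integrable_indicator measurableSet_Ioo
  set D : ℝ := ∫ x in Set.Ioo (-a) a, |qt x - q x| with hDdef
  set Q : ℝ := ∫ x in Set.Ioo (-a) a, |qt x| with hQdef
  have hD0 : 0 ≤ D := integral_nonneg fun x => abs_nonneg _
  have hQ0 : 0 ≤ Q := integral_nonneg fun x => abs_nonneg _
  have hDeq : (∫ x, |qt0 x - q0 x|) = D := by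
    rw [hDdef, ← integral_indicator measurableSet_Ioo]
    congr 1; funext x
    by_cases hx : x ∈ Set.Ioo (-a) a <;>
      simp [hq0def, hqt0def, Set.indicator_of_mem, Set.indicator_of_notMem, hx]
  have hQeq : (∫ x, |qt0 x|) = Q := by
    rw [hQdef, ← integral_indicator measurableSet_Ioo]
    congr 1; funext x
    by_cases hx : x ∈ Set.Ioo (-a) a <;>
      simp [hqt0def, Set.indicator_of_mem, Set.indicator_of_notMem, hx]
  -- interval integrability of q, qt
  have hqIcc : IntegrableOn q (Set.Icc (-a) a) := (integrableOn_Icc_iff_integrableOn_Ioo).2 hq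
  have hqtIcc : IntegrableOn qt (Set.Icc (-a) a) := (integrableOn_Icc_iff_integrableOn_Ioo).2 hqt
  have hsubIcc : ∀ {w : ℝ}, |w| ≤ a → Ι (0:ℝ) w ⊆ Set.Icc (-a) a :=
    fun {w} h x hx => abs_le.1 ((aux_abs_le_of_mem_uIoc hx).trans h)
  -- the sup function φ
  set φ : ℝ → ℝ := fun t => sSup ((fun p : ℝ × ℝ => |Ht p.1 p.2 - H p.1 p.2|) ''
      {p : ℝ × ℝ | (|p.1| + |p.2| ≤ a) ∧ |p.1| ≤ t}) with hφdef
  have hφub : ∀ t : ℝ, ∀ x ∈ ((fun p : ℝ × ℝ => |Ht p.1 p.2 - H p.1 p.2|) ''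
      {p : ℝ × ℝ | (|p.1| + |p.2| ≤ a) ∧ |p.1| ≤ t}), x ≤ S := by
    rintro t x ⟨p, ⟨hp1, _⟩, rfl⟩; exact hS p.1 p.2 hp1
  have hφbdd : ∀ t : ℝ, BddAbove ((fun p : ℝ × ℝ => |Ht p.1 p.2 - H p.1 p.2|) ''
      {p : ℝ × ℝ | (|p.1| + |p.2| ≤ a) ∧ |p.1| ≤ t}) := fun t => ⟨S, fun x hx => hφub t x hx⟩
  have hφleS : ∀ t, φ t ≤ S := fun t => Real.sSup_le (hφub t) hS0
  have hφmem : ∀ x y : ℝ, |x| + |y| ≤ a → ∀ t, |x| ≤ t → |Ht x y - H x y| ≤ φ t :=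
    fun x y h t ht => le_csSup (hφbdd t) ⟨(x, y), ⟨h, ht⟩, rfl⟩
  have hφneg : ∀ s : ℝ, s < 0 → φ s = 0 := by
    intro s hs
    have : {p : ℝ × ℝ | (|p.1| + |p.2| ≤ a) ∧ |p.1| ≤ s} = ∅ := by
      ext p
      simp only [Set.mem_setOf_eq, Set.mem_empty_iff_false, iff_false, not_and]
      exact fun _ h2 => absurd (le_trans (abs_nonneg _) h2) hs.not_ge
    simp [hφdef, this, Real.sSup_empty]
  have hφ0 : ∀ t : ℝ, 0 ≤ φ t := by
    intro t
    rcases le_or_gt 0 t with h | h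
    · exact le_trans (abs_nonneg _) (hφmem 0 0 (by simp [ha.le]) t (by simpa using h))
    · rw [hφneg t h]
  have hφmono : Monotone φ := by
    intro t t' htt'
    rcases le_or_gt 0 t' with h | h
    · refine Real.sSup_le ?_ (hφ0 t')
      rintro x ⟨p, ⟨hp1, hp2⟩, rfl⟩
      exact hφmem p.1 p.2 hp1 t' (hp2.trans htt')
    · rw [hφneg t (lt_of_le_of_lt htt' h), hφneg t' h]
  have hφmeas : Measurable φ := hφmono.measurable
  have hφabs : ∀ s, |φ s| ≤ S := fun s => abs_le.2 ⟨by linarith [hφ0 s], hφleS s⟩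
  have hφII : ∀ b c : ℝ, IntervalIntegrable φ volume b c := by
    intro b c
    rw [intervalIntegrable_iff]
    refine Measure.integrableOn_of_bounded (M := S) ?_ hφmeas.aestronglyMeasurable ?_
    · rw [Set.uIoc]; exact measure_Ioc_lt_top.ne
    · exact Filter.Eventually.of_forall fun s => by rw [Real.norm_eq_abs]; exact hφabs s
  have hQφII : ∀ b c : ℝ, IntervalIntegrable (fun s => Q * φ s) volume b c :=
    fun b c => (hφII b c).const_mul Q
  -- core integral inequality
  have hcore : ∀ u v : ℝ, |u| + |v| ≤ a →
      |Ht u v - H u v| ≤ (1/2 + a * MH) * D + ∫ s in (0:ℝ)..|u|, Q * φ s := by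
    intro u v huv
    have hu_le : |u| ≤ a := le_trans (le_add_of_nonneg_right (abs_nonneg v)) huv
    have hmemΩ : ∀ {α β : ℝ}, α ∈ Ι (0:ℝ) u → β ∈ Ι (0:ℝ) v → |α| + |β| ≤ a := fun hα hβ =>
      le_trans (add_le_add (aux_abs_le_of_mem_uIoc hα) (aux_abs_le_of_mem_uIoc hβ)) huv
    -- replacing the potential by its truncation in the double integral
    have hrepl : ∀ (g : ℝ → ℝ) (G : ℝ → ℝ → ℝ),
        (∫ α in (0:ℝ)..u, ∫ β in (0:ℝ)..v, g (α + β) * G α β)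
        = ∫ α in (0:ℝ)..u, ∫ β in (0:ℝ)..v, (Set.Ioo (-a) a).indicator g (α + β) * G α β := by
      intro g G
      refine intervalIntegral.integral_congr fun α hα => ?_
      have hαa : |α| ≤ |u| := by
        rcases Set.mem_uIcc.1 hα with h | h
        · rw [abs_of_nonneg h.1]; exact h.2.trans (le_abs_self u)
        · rw [abs_of_nonpos h.2]; exact (neg_le_neg h.1).trans (neg_le_abs u)
      refine intervalIntegral.integral_congr_ae ?_
      have hone : ∀ c : ℝ, ∀ᵐ β : ℝ, α + β ≠ c := by
        intro c
        rw [ae_iff]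
        have : {β : ℝ | ¬ α + β ≠ c} = {c - α} := by
          ext β; simp [not_not, eq_sub_iff_add_eq, add_comm]
        rw [this]; exact Real.volume_singleton
      filter_upwards [hone a, hone (-a)] with β hβ1 hβ2 hβmem
      have hin : α + β ∈ Set.Ioo (-a) a := by
        have h1 : |α + β| ≤ a := le_trans (abs_add_le α β)
          (le_trans (add_le_add hαa (aux_abs_le_of_mem_uIoc hβmem)) huv)
        rcases abs_le.1 h1 with ⟨hl, hr⟩
        exact ⟨lt_of_le_of_ne hl (Ne.symm hβ2), lt_of_le_of_ne hr hβ1⟩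
      rw [Set.indicator_of_mem hin]
    have hH'' : H u v = 1/2 * (∫ s in (0:ℝ)..u, q s)
        + ∫ α in (0:ℝ)..u, ∫ β in (0:ℝ)..v, q0 (α + β) * H α β := by
      rw [hH u v huv, hrepl q H, hq0def]
    have hHt'' : Ht u v = 1/2 * (∫ s in (0:ℝ)..u, qt s)
        + ∫ α in (0:ℝ)..u, ∫ β in (0:ℝ)..v, qt0 (α + β) * Ht α β := by
      rw [hHt u v huv, hrepl qt Ht, hqt0def]
    -- product integrability
    set μuv : Measure (ℝ × ℝ) := (volume.restrict (Ι (0:ℝ) u)).prod (volume.restrict (Ι (0:ℝ) v))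
      with hμdef
    have PA : Integrable (fun p : ℝ × ℝ => qt0 (p.1 + p.2) * Ht p.1 p.2) μuv :=
      aux_prod_integrable a u v huv qt0 hqt0 Ht hHtcont MHt hMHt
    have PB : Integrable (fun p : ℝ × ℝ => q0 (p.1 + p.2) * H p.1 p.2) μuv :=
      aux_prod_integrable a u v huv q0 hq0 H hHcont MH hMH
    have PD : Integrable (fun p : ℝ × ℝ => (qt0 (p.1 + p.2) - q0 (p.1 + p.2)) * H p.1 p.2) μuv :=
      aux_prod_integrable a u v huv (fun x => qt0 x - q0 x) (hqt0.sub hq0) H hHcont MH hMH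
    have PM : Integrable (fun p : ℝ × ℝ => qt0 (p.1 + p.2) * (Ht p.1 p.2 - H p.1 p.2)) μuv :=
      aux_prod_integrable a u v huv qt0 hqt0 (fun x y => Ht x y - H x y)
        (hHtcont.sub hHcont) S hS
    set X : ℝ := ∫ p, (qt0 (p.1 + p.2) - q0 (p.1 + p.2)) * H p.1 p.2 ∂μuv with hXdef
    set Y : ℝ := ∫ p, qt0 (p.1 + p.2) * (Ht p.1 p.2 - H p.1 p.2) ∂μuv with hYdef
    set σ : ℝ := (if (0:ℝ) ≤ u then (1:ℝ) else -1) * (if (0:ℝ) ≤ v then (1:ℝ) else -1)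
      with hσdef
    have hAB : (∫ α in (0:ℝ)..u, ∫ β in (0:ℝ)..v, qt0 (α + β) * Ht α β)
        - (∫ α in (0:ℝ)..u, ∫ β in (0:ℝ)..v, q0 (α + β) * H α β) = σ * (X + Y) := by
      rw [aux_iter u v _ PA, aux_iter u v _ PB, ← mul_sub, ← integral_sub PA PB,
        hXdef, hYdef, ← integral_add PD PM]
      congr 1
      refine integral_congr_ae (Filter.Eventually.of_forall fun p => ?_)
      ring
    have hMuv : Ht u v - H u v
        = 1/2 * ((∫ s in (0:ℝ)..u, qt s) - ∫ s in (0:ℝ)..u, q s) + σ * (X + Y) := by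
      rw [hHt'', hH'', ← hAB]; ring
    -- |σ| = 1
    have habsσ : |σ| = 1 := by
      rw [hσdef]; split_ifs <;> norm_num
    -- bound on the first term
    have hqII : IntervalIntegrable q volume 0 u :=
      intervalIntegrable_iff.2 (hqIcc.mono_set (hsubIcc hu_le))
    have hqtII : IntervalIntegrable qt volume 0 u :=
      intervalIntegrable_iff.2 (hqtIcc.mono_set (hsubIcc hu_le))
    have T1 : |(∫ s in (0:ℝ)..u, qt s) - ∫ s in (0:ℝ)..u, q s| ≤ D := by
      rw [← intervalIntegral.integral_sub hqtII hqII, ← Real.norm_eq_abs]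
      refine le_trans (intervalIntegral.norm_integral_le_integral_norm_uIoc) ?_
      simp only [Real.norm_eq_abs]
      rw [hDdef]
      refine setIntegral_mono_set ((hqt.sub hq).abs) ?_ ?_
      · exact Filter.Eventually.of_forall fun x => abs_nonneg _
      · rw [ae_le_set]
        refine measure_mono_null (fun x hx => ?_)
          (((Set.countable_singleton (-a)).insert a).measure_zero volume)
        rcases hx with ⟨hx1, hx2⟩
        have h1 : |x| ≤ a := (aux_abs_le_of_mem_uIoc hx1).trans hu_le
        rcases abs_le.1 h1 with ⟨hl, hr⟩
        simp only [Set.mem_Ioo, not_and_or, not_lt] at hx2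
        rcases hx2 with h | h
        · right; exact le_antisymm (by linarith) (by linarith)
        · left; exact le_antisymm hr h
    -- volume of the interval
    have hvol : (volume (Ι (0:ℝ) u)).toReal = |u| := by
      rw [Set.uIoc, Real.volume_Ioc, ENNReal.toReal_ofReal (by simp [min_le_max])]
      rw [max_sub_min_eq_abs]
      simp [abs_sub_comm]
    -- bound on X
    have T2 : |X| ≤ a * MH * D := by
      rw [hXdef, ← Real.norm_eq_abs]
      refine le_trans (norm_integral_le_integral_norm _) ?_
      rw [hμdef, MeasureTheory.integral_prod _ PD.norm]
      have hinner : ∀ α ∈ Ι (0:ℝ) u,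
          (∫ β in Ι (0:ℝ) v, ‖(qt0 (α + β) - q0 (α + β)) * H α β‖) ≤ MH * D := by
        intro α hα
        have htr : Integrable (fun β => qt0 (α + β) - q0 (α + β)) volume :=
          (hqt0.sub hq0).comp_add_left α
        calc (∫ β in Ι (0:ℝ) v, ‖(qt0 (α + β) - q0 (α + β)) * H α β‖)
            ≤ ∫ β in Ι (0:ℝ) v, |qt0 (α + β) - q0 (α + β)| * MH := by
              refine integral_mono_of_nonneg (Filter.Eventually.of_forall fun β => norm_nonneg _)
                ((htr.abs.mul_const MH).integrableOn) ?_
              refine ae_restrict_of_forall_mem measurableSet_uIoc fun β hβ => ?_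
              simp only [Real.norm_eq_abs, abs_mul]
              exact mul_le_mul_of_nonneg_left (hMH α β (hmemΩ hα hβ)) (abs_nonneg _)
          _ = (∫ β in Ι (0:ℝ) v, |qt0 (α + β) - q0 (α + β)|) * MH := by
              rw [integral_mul_const]
          _ ≤ D * MH := by
              refine mul_le_mul_of_nonneg_right ?_ hMH0
              refine le_trans (setIntegral_le_integral htr.abs
                (Filter.Eventually.of_forall fun β => abs_nonneg _)) ?_
              rw [show (∫ β, |qt0 (α + β) - q0 (α + β)|) = ∫ x, |qt0 x - q0 x| from
                integral_add_left_eq_self (fun x => |qt0 x - q0 x|) α, hDeq]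
          _ = MH * D := mul_comm _ _
      calc (∫ α in Ι (0:ℝ) u, ∫ β in Ι (0:ℝ) v, ‖(qt0 (α + β) - q0 (α + β)) * H α β‖)
          ≤ ∫ _ in Ι (0:ℝ) u, MH * D := by
            refine integral_mono_of_nonneg
              (Filter.Eventually.of_forall fun α => integral_nonneg fun β => norm_nonneg _)
              (integrableOn_const (by rw [Set.uIoc]; exact measure_Ioc_lt_top.ne)) ?_
            exact ae_restrict_of_forall_mem measurableSet_uIoc hinner
        _ = |u| * (MH * D) := by rw [setIntegral_const, smul_eq_mul, measureReal_def, hvol]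
        _ ≤ a * MH * D := by
            rw [← mul_assoc]
            exact mul_le_mul_of_nonneg_right
              (mul_le_mul_of_nonneg_right hu_le hMH0) hD0
    -- bound on Y
    have T3 : |Y| ≤ ∫ s in (0:ℝ)..|u|, Q * φ s := by
      rw [hYdef, ← Real.norm_eq_abs]
      refine le_trans (norm_integral_le_integral_norm _) ?_
      rw [hμdef, MeasureTheory.integral_prod _ PM.norm]
      have hRHSint : IntegrableOn (fun α => Q * φ |α|) (Ι (0:ℝ) u) volume := by
        refine Measure.integrableOn_of_bounded (M := Q * S)
          (by rw [Set.uIoc]; exact measure_Ioc_lt_top.ne)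
          ((hφmeas.comp measurable_abs).const_mul Q).aestronglyMeasurable
          (Filter.Eventually.of_forall fun s => ?_)
        rw [Real.norm_eq_abs, abs_mul, abs_of_nonneg hQ0]
        exact mul_le_mul_of_nonneg_left (hφabs _) hQ0
      have step1 : (∫ α in Ι (0:ℝ) u, ∫ β in Ι (0:ℝ) v, ‖qt0 (α + β) * (Ht α β - H α β)‖)
          ≤ ∫ α in Ι (0:ℝ) u, Q * φ |α| := by
        refine integral_mono_of_nonneg
          (Filter.Eventually.of_forall fun α => integral_nonneg fun β => norm_nonneg _)
          hRHSint ?_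
        refine ae_restrict_of_forall_mem measurableSet_uIoc fun α hα => ?_
        have htr : Integrable (fun β => qt0 (α + β)) volume := hqt0.comp_add_left α
        calc (∫ β in Ι (0:ℝ) v, ‖qt0 (α + β) * (Ht α β - H α β)‖)
            ≤ ∫ β in Ι (0:ℝ) v, |qt0 (α + β)| * φ |α| := by
              refine integral_mono_of_nonneg (Filter.Eventually.of_forall fun β => norm_nonneg _)
                ((htr.abs.mul_const _).integrableOn) ?_
              refine ae_restrict_of_forall_mem measurableSet_uIoc fun β hβ => ?_
              simp only [Real.norm_eq_abs, abs_mul]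
              exact mul_le_mul_of_nonneg_left
                (hφmem α β (hmemΩ hα hβ) |α| le_rfl) (abs_nonneg _)
          _ = (∫ β in Ι (0:ℝ) v, |qt0 (α + β)|) * φ |α| := by rw [integral_mul_const]
          _ ≤ Q * φ |α| := by
              refine mul_le_mul_of_nonneg_right ?_ (hφ0 _)
              refine le_trans (setIntegral_le_integral htr.abs
                (Filter.Eventually.of_forall fun β => abs_nonneg _)) ?_
              rw [show (∫ β, |qt0 (α + β)|) = ∫ x, |qt0 x| from
                integral_add_left_eq_self (fun x => |qt0 x|) α, hQeq]
      refine le_trans step1 (le_of_eq ?_)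
      rcases le_or_gt 0 u with hu | hu
      · rw [Set.uIoc_of_le hu, abs_of_nonneg hu, intervalIntegral.integral_of_le hu]
        refine setIntegral_congr_fun measurableSet_Ioc fun x hx => ?_
        rw [abs_of_nonneg hx.1.le]
      · rw [Set.uIoc_of_ge hu.le]
        have h1 : (∫ α in Set.Ioc u 0, Q * φ |α|) = ∫ α in u..(0:ℝ), Q * φ |α| :=
          (intervalIntegral.integral_of_le hu.le).symm
        have h2 : (∫ α in u..(0:ℝ), Q * φ |α|) = ∫ α in u..(0:ℝ), Q * φ (-α) := by
          refine intervalIntegral.integral_congr fun x hx => ?_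
          rw [Set.uIcc_of_le hu.le] at hx
          rw [abs_of_nonpos hx.2]
        have h3 : (∫ α in u..(0:ℝ), Q * φ (-α)) = ∫ s in (-(0:ℝ))..(-u), Q * φ s :=
          intervalIntegral.integral_comp_neg (fun s => Q * φ s)
        rw [h1, h2, h3, abs_of_neg hu, neg_zero]
    -- combine
    have final : |Ht u v - H u v|
        ≤ 1/2 * D + (a * MH * D + ∫ s in (0:ℝ)..|u|, Q * φ s) := by
      rw [hMuv]
      refine le_trans (abs_add_le _ _) ?_
      refine add_le_add ?_ ?_
      · rw [abs_mul, abs_of_nonneg (by norm_num : (0:ℝ) ≤ 1/2)]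
        exact mul_le_mul_of_nonneg_left T1 (by norm_num)
      · rw [abs_mul, habsσ, one_mul]
        exact le_trans (abs_add_le _ _) (add_le_add T2 T3)
    linarith [final]
  -- recursive inequality for φ
  have hrec : ∀ t : ℝ, 0 ≤ t → φ t ≤ (1/2 + a * MH) * D + ∫ s in (0:ℝ)..t, Q * φ s := by
    intro t ht
    have hintnn : ∀ b c : ℝ, b ≤ c → 0 ≤ b → 0 ≤ ∫ s in b..c, Q * φ s := fun b c hbc hb =>
      intervalIntegral.integral_nonneg hbc fun s _ => mul_nonneg hQ0 (hφ0 s)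
    refine Real.sSup_le ?_ (add_nonneg (mul_nonneg hC0 hD0) (hintnn 0 t ht le_rfl))
    rintro x ⟨p, ⟨hp1, hp2⟩, rfl⟩
    refine le_trans (hcore p.1 p.2 hp1) (add_le_add_right ?_ _)
    have h1 := intervalIntegral.integral_add_adjacent_intervals
      (hQφII 0 |p.1|) (hQφII |p.1| t)
    have h2 : 0 ≤ ∫ s in |p.1|..t, Q * φ s := hintnn |p.1| t hp2 (abs_nonneg _)
    linarith
  -- Gronwall by iteration
  have hgron : ∀ n : ℕ, ∀ t : ℝ, 0 ≤ t →
      φ t ≤ (1/2 + a * MH) * D * (∑ k ∈ Finset.range n, (Q*t)^k / (Nat.factorial k))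
        + S * ((Q*t)^n / (Nat.factorial n)) := by
    intro n
    induction n with
    | zero => intro t ht; simpa using hφleS t
    | succ n ih =>
      intro t ht
      refine le_trans (hrec t ht) ?_
      have hstep : (∫ s in (0:ℝ)..t, Q * φ s)
          ≤ ∫ s in (0:ℝ)..t, Q * ((1/2 + a * MH) * D *
              (∑ k ∈ Finset.range n, (Q*s)^k / (Nat.factorial k))
            + S * ((Q*s)^n / (Nat.factorial n))) := by
        refine intervalIntegral.integral_mono_on ht (hQφII 0 t) ?_ ?_
        · refine Continuous.intervalIntegrable ?_ 0 t
          refine continuous_const.mul (Continuous.add ?_ ?_)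
          · exact continuous_const.mul (continuous_finset_sum _ fun k _ =>
              (((continuous_const.mul continuous_id).pow k).div_const _))
          · exact continuous_const.mul
              (((continuous_const.mul continuous_id).pow n).div_const _)
        · intro s hs
          exact mul_le_mul_of_nonneg_left (ih s hs.1) hQ0
      rw [aux_int_step] at hstep
      have hsum : (1/2 + a * MH) * D * (∑ k ∈ Finset.range (n+1), (Q*t)^k / (Nat.factorial k))
          = (1/2 + a * MH) * D
            + (1/2 + a * MH) * D * (∑ k ∈ Finset.range n, (Q*t)^(k+1) / (Nat.factorial (k+1))) := by
        rw [Finset.sum_range_succ']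
        simp only [pow_zero, Nat.factorial_zero, Nat.cast_one, div_one]
        ring
      rw [hsum]
      linarith
  -- pass to the limit
  have hfinal : ∀ t : ℝ, 0 ≤ t → φ t ≤ (1/2 + a * MH) * D * Real.exp (Q * t) := by
    intro t ht
    have hQt : 0 ≤ Q * t := mul_nonneg hQ0 ht
    have h1 : ∀ n : ℕ, φ t ≤ (1/2 + a * MH) * D * Real.exp (Q * t)
        + S * ((Q*t)^n / (Nat.factorial n)) := by
      intro n
      refine le_trans (hgron n t ht) (add_le_add_left ?_ _)
      exact mul_le_mul_of_nonneg_left (Real.sum_le_exp_of_nonneg hQt n)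
        (mul_nonneg hC0 hD0)
    have h2 : Filter.Tendsto
        (fun n : ℕ => (1/2 + a * MH) * D * Real.exp (Q * t)
          + S * ((Q*t)^n / (Nat.factorial n))) Filter.atTop
        (nhds ((1/2 + a * MH) * D * Real.exp (Q * t))) := by
      have h3 := (FloorSemiring.tendsto_pow_div_factorial_atTop (K := ℝ) (Q*t)).const_mul S
      simpa using tendsto_const_nhds.add h3
    exact ge_of_tendsto' h2 h1
  -- conclusion
  intro u v huv
  have hu_le : |u| ≤ a := le_trans (le_add_of_nonneg_right (abs_nonneg v)) huv
  have h1 : |Ht u v - H u v| ≤ φ |u| := hφmem u v huv |u| le_rfl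
  have h2 := hfinal |u| (abs_nonneg u)
  have h3 : Real.exp (Q * |u|) ≤ Real.exp (a * Q) := by
    refine Real.exp_le_exp.2 ?_
    rw [mul_comm a Q]
    exact mul_le_mul_of_nonneg_left hu_le hQ0
  calc |Ht u v - H u v| ≤ (1/2 + a * MH) * D * Real.exp (Q * |u|) := h1.trans h2
    _ ≤ (1/2 + a * MH) * D * Real.exp (a * Q) :=
        mul_le_mul_of_nonneg_left h3 (mul_nonneg hC0 hD0)
end
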